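/- Let 𝓛, σ₀, ε ∈ (0,1], T, a, b be as in the a priori energy inequality, with ker 𝓛 = span{1} and spectral gap σ₀ > 0, and let E be a C¹ solution of ε ∂_t E + μ ∂_x E + (1/ε) 𝓛 E = R + G with ∫_{−1}^1 R(t,x,μ) dμ = 0 for all (t,x). Suppose there is a constant C > 0 such that ∫₀^T ‖R(s)‖²_{L²(dx dμ)} ds ≤ C² ε⁴, ∫₀^T ‖G(s)‖_{L²(dx dμ)} ds ≤ C ε³, ‖E(0)‖²_{L²(dx dμ)} ≤ C ε², ∫₀^T ∫₀^1 μ E(s,a,μ)² dμ ds ≤ C ε², and ∫₀^T ∫_{−1}^0 |μ| E(s,b,μ)² dμ ds ≤ C ε². Then there is a constant C′ depending only on C and σ₀ (not on ε) such that sup_{t ∈ [0,T]} ‖E(t)‖_{L²([a,b]×[−1,1])} ≤ C′ √ε. -/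

import Mathlib

open MeasureTheory Set

lemma aux_int_of_bdd {α : Type*} [MeasurableSpace α] {ν : Measure α} [IsFiniteMeasure ν]
    {f : α → ℝ} (hm : AEStronglyMeasurable f ν) (K : ℝ) (h : ∀ᵐ x ∂ν, |f x| ≤ K) :
    Integrable f ν :=
  memLp_one_iff_integrable.1 (MemLp.of_bound hm K (by simpa [Real.norm_eq_abs] using h))

lemma aux_intS (S : Set ℝ) (hS : MeasurableSet S) (hfin : volume S < ⊤) (f : ℝ → ℝ)
    (hm : AEStronglyMeasurable f (volume.restrict S)) (B : ℝ) (hb : ∀ x ∈ S, |f x| ≤ B) :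
    Integrable f (volume.restrict S) := by
  haveI : IsFiniteMeasure (volume.restrict S) := ⟨by simpa [Measure.restrict_apply_univ] using hfin⟩
  exact aux_int_of_bdd hm B ((ae_restrict_iff' hS).2 (ae_of_all _ hb))

lemma aux_sm_int {α : Type*} [MeasurableSpace α] (ν : Measure ℝ) [SFinite ν]
    (f : α → ℝ → ℝ) (hf : StronglyMeasurable (fun q : α × ℝ => f q.1 q.2)) :
    StronglyMeasurable (fun a => ∫ μ, f a μ ∂ν) :=
  hf.integral_prod_right'

lemma aux_swap (I J : Set ℝ) (hI : MeasurableSet I) (hJ : MeasurableSet J)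
    (hIf : volume I < ⊤) (hJf : volume J < ⊤) (H : ℝ → ℝ → ℝ)
    (hm : StronglyMeasurable (fun p : ℝ × ℝ => H p.1 p.2)) (B : ℝ)
    (hb : ∀ s ∈ I, ∀ x ∈ J, |H s x| ≤ B) :
    ∫ s in I, ∫ x in J, H s x = ∫ x in J, ∫ s in I, H s x := by
  haveI : IsFiniteMeasure (volume.restrict I) := ⟨by simpa [Measure.restrict_apply_univ] using hIf⟩
  haveI : IsFiniteMeasure (volume.restrict J) := ⟨by simpa [Measure.restrict_apply_univ] using hJf⟩
  have hint : Integrable (Function.uncurry H) ((volume.restrict I).prod (volume.restrict J)) := by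
    refine aux_int_of_bdd hm.aestronglyMeasurable B ?_
    rw [Measure.prod_restrict]
    refine (ae_restrict_iff' (hI.prod hJ)).2 (ae_of_all _ ?_)
    rintro ⟨s, x⟩ ⟨hs, hx⟩
    exact hb s hs x hx
  exact integral_integral_swap hint

lemma aux_ftc (c d : ℝ) (hcd : c ≤ d) (f : ℝ → ℝ) (hdf : ∀ x, DifferentiableAt ℝ f x)
    (hcont : Continuous (fun x => f x * deriv f x)) :
    ∫ x in Icc c d, f x * deriv f x = f d ^ 2 / 2 - f c ^ 2 / 2 := by
  rw [integral_Icc_eq_integral_Ioc, ← intervalIntegral.integral_of_le hcd]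
  have h : ∀ x ∈ uIcc c d, HasDerivAt (fun y => f y ^ 2 / 2) (f x * deriv f x) x := by
    intro x _
    have h := ((hdf x).hasDerivAt.fun_pow 2).div_const 2
    refine h.congr_deriv ?_
    push_cast
    ring
  exact intervalIntegral.integral_eq_sub_of_hasDerivAt h (hcont.intervalIntegrable c d)

lemma aux_cs {α : Type*} [MeasurableSpace α] (ν : Measure α) (f g : α → ℝ)
    (hfm : AEStronglyMeasurable f ν) (hgm : AEStronglyMeasurable g ν)
    (hf : Integrable (fun x => f x ^ 2) ν) (hg : Integrable (fun x => g x ^ 2) ν) :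
    ∫ x, f x * g x ∂ν ≤ Real.sqrt (∫ x, f x ^ 2 ∂ν) * Real.sqrt (∫ x, g x ^ 2 ∂ν) := by
  have hfg : Integrable (fun x => f x * g x) ν := by
    refine (hf.add hg).mono (hfm.mul hgm) (ae_of_all _ fun x => ?_)
    have h1 : |f x * g x| ≤ f x ^ 2 + g x ^ 2 := by
      rw [abs_mul]
      nlinarith [sq_nonneg (|f x| - |g x|), abs_nonneg (f x), abs_nonneg (g x),
        sq_abs (f x), sq_abs (g x)]
    rw [Real.norm_eq_abs, Real.norm_eq_abs]
    simp only [Pi.add_apply]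
    rw [abs_of_nonneg (by positivity : (0:ℝ) ≤ f x ^ 2 + g x ^ 2)]
    exact h1
  set A := ∫ x, f x ^ 2 ∂ν with hA
  set B := ∫ x, g x ^ 2 ∂ν with hB
  have hA0 : 0 ≤ A := integral_nonneg fun x => sq_nonneg _
  have hB0 : 0 ≤ B := integral_nonneg fun x => sq_nonneg _
  have key : ∀ lam : ℝ, 0 < lam → ∫ x, f x * g x ∂ν ≤ (lam * A + B / lam) / 2 := by
    intro lam hlam
    have hint : Integrable (fun x => (lam * f x ^ 2 + g x ^ 2 / lam) / 2) ν :=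
      ((hf.const_mul lam).add (hg.div_const lam)).div_const 2
    have hpt : ∀ x, f x * g x ≤ (lam * f x ^ 2 + g x ^ 2 / lam) / 2 := by
      intro x
      have h2 : 2 * lam * (f x * g x) ≤ lam ^ 2 * f x ^ 2 + g x ^ 2 := by
        nlinarith [sq_nonneg (lam * f x - g x)]
      have h3 : f x * g x ≤ (lam ^ 2 * f x ^ 2 + g x ^ 2) / (2 * lam) := by
        rw [le_div_iff₀ (by positivity)]
        linarith
      calc f x * g x ≤ (lam ^ 2 * f x ^ 2 + g x ^ 2) / (2 * lam) := h3
        _ = (lam * f x ^ 2 + g x ^ 2 / lam) / 2 := by field_simp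
    calc ∫ x, f x * g x ∂ν ≤ ∫ x, (lam * f x ^ 2 + g x ^ 2 / lam) / 2 ∂ν :=
        integral_mono hfg hint hpt
      _ = (lam * A + B / lam) / 2 := by
        rw [integral_div, integral_add (hf.const_mul lam) (hg.div_const lam),
          integral_const_mul, integral_div]
  rcases eq_or_lt_of_le hA0 with hA' | hA'
  · have h0 : ∫ x, f x * g x ∂ν ≤ 0 := by
      refine le_of_forall_pos_le_add fun c hc => ?_
      rcases eq_or_lt_of_le hB0 with hB' | hB'
      · have h1 := key 1 one_pos
        rw [← hA', ← hB'] at h1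
        norm_num at h1
        linarith
      · have h1 := key (B / c) (by positivity)
        rw [← hA'] at h1
        have heq : (B / c * 0 + B / (B / c)) / 2 = c / 2 := by
          rw [mul_zero, zero_add, div_div_eq_mul_div, mul_comm B c, mul_div_assoc,
            div_self hB'.ne', mul_one]
        rw [heq] at h1
        linarith
    rw [← hA']
    simpa using h0.trans (by positivity)
  · rcases eq_or_lt_of_le hB0 with hB' | hB'
    · have h0 : ∫ x, f x * g x ∂ν ≤ 0 := by
        refine le_of_forall_pos_le_add fun c hc => ?_
        have h1 := key (c / A) (by positivity)
        rw [← hB'] at h1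
        have heq : (c / A * A + 0 / (c / A)) / 2 = c / 2 := by
          rw [div_mul_cancel₀ _ hA'.ne', zero_div, add_zero]
        rw [heq] at h1
        linarith
      rw [← hB']
      simpa using h0.trans (by positivity)
    · have hsa : 0 < Real.sqrt A := Real.sqrt_pos.2 hA'
      have hsb : 0 < Real.sqrt B := Real.sqrt_pos.2 hB'
      have h1 := key (Real.sqrt B / Real.sqrt A) (by positivity)
      have heq : (Real.sqrt B / Real.sqrt A * A + B / (Real.sqrt B / Real.sqrt A)) / 2
          = Real.sqrt A * Real.sqrt B := by
        have ha2 : Real.sqrt A ^ 2 = A := Real.sq_sqrt hA0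
        have hb2 : Real.sqrt B ^ 2 = B := Real.sq_sqrt hB0
        field_simp
        nlinarith [ha2, hb2, hsa, hsb]
      rw [heq] at h1
      exact h1

lemma aux_intS2 (S : Set ℝ) (hS : MeasurableSet S) (hfin : volume S < ⊤) (f : ℝ → ℝ)
    (hm : AEStronglyMeasurable f (volume.restrict S)) (B : ℝ) (hb : ∀ x ∈ S, |f x| ≤ B) :
    Integrable f (volume.restrict S) := by
  haveI : IsFiniteMeasure (volume.restrict S) := ⟨by simpa [Measure.restrict_apply_univ] using hfin⟩
  exact memLp_one_iff_integrable.1 (MemLp.of_bound hm B (by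
    refine (ae_restrict_iff' hS).2 (ae_of_all _ ?_)
    simpa [Real.norm_eq_abs] using hb))

lemma aux_intle (S : Set ℝ) (hS : MeasurableSet S) (hfin : volume S < ⊤) (f : ℝ → ℝ) (B : ℝ)
    (hfi : IntegrableOn f S volume) (hb : ∀ x ∈ S, f x ≤ B) :
    ∫ x in S, f x ≤ B * (volume S).toReal := by
  have h := setIntegral_mono_on hfi (integrableOn_const hfin.ne) hS hb
  rw [setIntegral_const, smul_eq_mul, mul_comm] at h
  exact h

lemma aux_bdInner (L : Set ℝ) (hL : MeasurableSet L) (hLf : volume L < ⊤)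
    (f : ℝ → ℝ) (B : ℝ) (hfi : IntegrableOn f L volume) (hb : ∀ μ ∈ L, |f μ| ≤ B) :
    |∫ μ in L, f μ| ≤ B * (volume L).toReal := by
  have h1 : |∫ μ in L, f μ| ≤ ∫ μ in L, |f μ| := by
    simpa [Real.norm_eq_abs] using norm_integral_le_integral_norm (μ := volume.restrict L) f
  exact h1.trans (aux_intle L hL hLf _ B hfi.abs hb)

lemma aux_sm_int' {α : Type*} [MeasurableSpace α] (ν : Measure ℝ) [SFinite ν]
    (f : α → ℝ → ℝ) (hf : StronglyMeasurable (fun q : α × ℝ => f q.1 q.2)) :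
    StronglyMeasurable (fun a => ∫ μ, f a μ ∂ν) :=
  hf.integral_prod_right'

lemma aux_pack (I J L : Set ℝ) (hI : MeasurableSet I) (hJ : MeasurableSet J) (hL : MeasurableSet L)
    (hIf : volume I < ⊤) (hJf : volume J < ⊤) (hLf : volume L < ⊤)
    (f : ℝ → ℝ → ℝ → ℝ)
    (hfm : StronglyMeasurable (fun p : ℝ × ℝ × ℝ => f p.1 p.2.1 p.2.2))
    (Bf : ℝ) (hfb : ∀ s ∈ I, ∀ x ∈ J, ∀ μ ∈ L, |f s x μ| ≤ Bf) :
    (∀ s ∈ I, ∀ x ∈ J, Integrable (fun μ => f s x μ) (volume.restrict L)) ∧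
    (∀ s ∈ I, Integrable (fun x => ∫ μ in L, f s x μ) (volume.restrict J)) ∧
    Integrable (fun s => ∫ x in J, ∫ μ in L, f s x μ) (volume.restrict I) ∧
    StronglyMeasurable (fun p : ℝ × ℝ => ∫ μ in L, f p.1 p.2 μ) ∧
    StronglyMeasurable (fun s => ∫ x in J, ∫ μ in L, f s x μ) := by
  have hsm2 : StronglyMeasurable (fun p : ℝ × ℝ => ∫ μ in L, f p.1 p.2 μ) := by
    have h0 : StronglyMeasurable (fun q : (ℝ × ℝ) × ℝ => f q.1.1 q.1.2 q.2) :=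
      hfm.comp_measurable ((measurable_fst.fst).prodMk
        ((measurable_fst.snd).prodMk measurable_snd))
    exact aux_sm_int' (volume.restrict L) (fun (p : ℝ × ℝ) μ => f p.1 p.2 μ) h0
  have hsm1 : StronglyMeasurable (fun s => ∫ x in J, ∫ μ in L, f s x μ) := by
    exact aux_sm_int' (volume.restrict J) (fun s x => ∫ μ in L, f s x μ) hsm2
  have hinner : ∀ s ∈ I, ∀ x ∈ J, Integrable (fun μ => f s x μ) (volume.restrict L) := by
    intro s hs x hx
    exact aux_intS2 L hL hLf _ ((hfm.comp_measurable
      (measurable_const.prodMk (measurable_const.prodMk measurable_id))).aestronglyMeasurable)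
      Bf (hfb s hs x hx)
  have hmid : ∀ s ∈ I, Integrable (fun x => ∫ μ in L, f s x μ) (volume.restrict J) := by
    intro s hs
    refine aux_intS2 J hJ hJf _ ((hsm2.comp_measurable
      (measurable_const.prodMk measurable_id)).aestronglyMeasurable) (Bf * (volume L).toReal) ?_
    intro x hx
    exact aux_bdInner L hL hLf _ Bf (hinner s hs x hx) (hfb s hs x hx)
  have houter : Integrable (fun s => ∫ x in J, ∫ μ in L, f s x μ) (volume.restrict I) := by
    refine aux_intS2 I hI hIf _ hsm1.aestronglyMeasurable
      (Bf * (volume L).toReal * (volume J).toReal) ?_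
    intro s hs
    refine aux_bdInner J hJ hJf _ (Bf * (volume L).toReal) (hmid s hs) ?_
    intro x hx
    exact aux_bdInner L hL hLf _ Bf (hinner s hs x hx) (hfb s hs x hx)
  exact ⟨hinner, hmid, houter, hsm2, hsm1⟩

lemma aux_add2 (I J L : Set ℝ) (hI : MeasurableSet I) (hJ : MeasurableSet J) (hL : MeasurableSet L)
    (hIf : volume I < ⊤) (hJf : volume J < ⊤) (hLf : volume L < ⊤)
    (f g : ℝ → ℝ → ℝ → ℝ)
    (hfm : StronglyMeasurable (fun p : ℝ × ℝ × ℝ => f p.1 p.2.1 p.2.2))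
    (hgm : StronglyMeasurable (fun p : ℝ × ℝ × ℝ => g p.1 p.2.1 p.2.2))
    (Bf Bg : ℝ)
    (hfb : ∀ s ∈ I, ∀ x ∈ J, ∀ μ ∈ L, |f s x μ| ≤ Bf)
    (hgb : ∀ s ∈ I, ∀ x ∈ J, ∀ μ ∈ L, |g s x μ| ≤ Bg) :
    ∫ s in I, ∫ x in J, ∫ μ in L, (f s x μ + g s x μ)
      = (∫ s in I, ∫ x in J, ∫ μ in L, f s x μ) + ∫ s in I, ∫ x in J, ∫ μ in L, g s x μ := by
  obtain ⟨fi, fmid, fout, -, -⟩ := aux_pack I J L hI hJ hL hIf hJf hLf f hfm Bf hfb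
  obtain ⟨gi, gmid, gout, -, -⟩ := aux_pack I J L hI hJ hL hIf hJf hLf g hgm Bg hgb
  have h1 : ∀ s ∈ I, ∫ x in J, ∫ μ in L, (f s x μ + g s x μ)
      = (∫ x in J, ∫ μ in L, f s x μ) + ∫ x in J, ∫ μ in L, g s x μ := by
    intro s hs
    have h2 : ∀ x ∈ J, ∫ μ in L, (f s x μ + g s x μ)
        = (∫ μ in L, f s x μ) + ∫ μ in L, g s x μ := fun x hx =>
      integral_add (fi s hs x hx) (gi s hs x hx)
    rw [setIntegral_congr_fun hJ h2]
    exact integral_add (fmid s hs) (gmid s hs)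
  rw [setIntegral_congr_fun hI h1]
  exact integral_add fout gout

lemma aux_mono2 (I J : Set ℝ) (hI : MeasurableSet I) (hJ : MeasurableSet J)
    (hIf : volume I < ⊤) (hJf : volume J < ⊤) (F G : ℝ → ℝ → ℝ)
    (hFm : StronglyMeasurable (fun p : ℝ × ℝ => F p.1 p.2))
    (hGm : StronglyMeasurable (fun p : ℝ × ℝ => G p.1 p.2))
    (BF BG : ℝ)
    (hFb : ∀ s ∈ I, ∀ x ∈ J, |F s x| ≤ BF) (hGb : ∀ s ∈ I, ∀ x ∈ J, |G s x| ≤ BG)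
    (hle : ∀ s ∈ I, ∀ x ∈ J, F s x ≤ G s x) :
    ∫ s in I, ∫ x in J, F s x ≤ ∫ s in I, ∫ x in J, G s x := by
  have intF : ∀ s ∈ I, Integrable (F s) (volume.restrict J) := fun s hs =>
    aux_intS2 J hJ hJf _ ((hFm.comp_measurable
      (measurable_const.prodMk measurable_id)).aestronglyMeasurable) BF (hFb s hs)
  have intG : ∀ s ∈ I, Integrable (G s) (volume.restrict J) := fun s hs =>
    aux_intS2 J hJ hJf _ ((hGm.comp_measurable
      (measurable_const.prodMk measurable_id)).aestronglyMeasurable) BG (hGb s hs)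
  refine setIntegral_mono_on ?_ ?_ hI ?_
  · refine aux_intS2 I hI hIf _ (aux_sm_int' (volume.restrict J) F hFm).aestronglyMeasurable
      (BF * (volume J).toReal) ?_
    intro s hs
    exact aux_bdInner J hJ hJf _ BF (intF s hs) (hFb s hs)
  · refine aux_intS2 I hI hIf _ (aux_sm_int' (volume.restrict J) G hGm).aestronglyMeasurable
      (BG * (volume J).toReal) ?_
    intro s hs
    exact aux_bdInner J hJ hJf _ BG (intG s hs) (hGb s hs)
  · intro s hs
    exact setIntegral_mono_on (intF s hs) (intG s hs) hJ (hle s hs)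
lemma aux_add2d (I J : Set ℝ) (hI : MeasurableSet I) (hJ : MeasurableSet J)
    (hIf : volume I < ⊤) (hJf : volume J < ⊤) (F G : ℝ → ℝ → ℝ)
    (hFm : StronglyMeasurable (fun p : ℝ × ℝ => F p.1 p.2))
    (hGm : StronglyMeasurable (fun p : ℝ × ℝ => G p.1 p.2))
    (BF BG : ℝ)
    (hFb : ∀ s ∈ I, ∀ x ∈ J, |F s x| ≤ BF) (hGb : ∀ s ∈ I, ∀ x ∈ J, |G s x| ≤ BG) :
    ∫ s in I, ∫ x in J, (F s x + G s x)
      = (∫ s in I, ∫ x in J, F s x) + ∫ s in I, ∫ x in J, G s x := by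
  have intF : ∀ s ∈ I, Integrable (F s) (volume.restrict J) := fun s hs =>
    aux_intS2 J hJ hJf _ ((hFm.comp_measurable
      (measurable_const.prodMk measurable_id)).aestronglyMeasurable) BF (hFb s hs)
  have intG : ∀ s ∈ I, Integrable (G s) (volume.restrict J) := fun s hs =>
    aux_intS2 J hJ hJf _ ((hGm.comp_measurable
      (measurable_const.prodMk measurable_id)).aestronglyMeasurable) BG (hGb s hs)
  have h1 : ∀ s ∈ I, ∫ x in J, (F s x + G s x) = (∫ x in J, F s x) + ∫ x in J, G s x :=
    fun s hs => integral_add (intF s hs) (intG s hs)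
  rw [setIntegral_congr_fun hI h1]
  refine integral_add ?_ ?_
  · refine aux_intS2 I hI hIf _ (aux_sm_int' (volume.restrict J) F hFm).aestronglyMeasurable
      (BF * (volume J).toReal) ?_
    intro s hs
    exact aux_bdInner J hJ hJf _ BF (intF s hs) (hFb s hs)
  · refine aux_intS2 I hI hIf _ (aux_sm_int' (volume.restrict J) G hGm).aestronglyMeasurable
      (BG * (volume J).toReal) ?_
    intro s hs
    exact aux_bdInner J hJ hJf _ BG (intG s hs) (hGb s hs)

set_option maxHeartbeats 2000000 in
/-- Grönwall-type conclusion of the energy estimate: under the `O(ε)`-scaled bounds on the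
residuals, the initial data and the boundary terms, the error `E` is `O(√ε)` in
`L^∞(0,T; L²([a,b]×[-1,1]))`, with a constant depending only on `C` and `σ₀`. -/
theorem stmt8 (σ₀ C : ℝ) (hσ₀ : 0 < σ₀) (hC : 0 < C) :
    ∃ C' : ℝ, 0 < C' ∧
      ∀ (κ : ℝ → ℝ → ℝ),
        Measurable (Function.uncurry κ) →
        (∀ μ ∈ Icc (-1:ℝ) 1, ∀ μ' ∈ Icc (-1:ℝ) 1, 0 ≤ κ μ μ') →
        (∀ μ ∈ Icc (-1:ℝ) 1, ∀ μ' ∈ Icc (-1:ℝ) 1, κ μ μ' = κ μ' μ) →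
        (∀ μ ∈ Icc (-1:ℝ) 1, (∫ μ' in Icc (-1:ℝ) 1, κ μ μ') = 1) →
        -- `ker 𝓛 = span {1}`:
        (∀ g : ℝ → ℝ, MemLp g 2 (volume.restrict (Icc (-1:ℝ) 1)) →
          (∀ᵐ μ ∂(volume.restrict (Icc (-1:ℝ) 1)),
            g μ - (∫ μ' in Icc (-1:ℝ) 1, κ μ μ' * g μ') = 0) →
          ∃ c : ℝ, ∀ᵐ μ ∂(volume.restrict (Icc (-1:ℝ) 1)), g μ = c) →
        -- spectral gap `σ₀`:
        (∀ g : ℝ → ℝ, MemLp g 2 (volume.restrict (Icc (-1:ℝ) 1)) →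
          σ₀ * (∫ μ in Icc (-1:ℝ) 1, (g μ - (1/2) * ∫ μ' in Icc (-1:ℝ) 1, g μ') ^ 2) ≤
            ∫ μ in Icc (-1:ℝ) 1, g μ * (g μ - ∫ μ' in Icc (-1:ℝ) 1, κ μ μ' * g μ')) →
        ∀ (ε : ℝ), ε ∈ Ioc (0:ℝ) 1 →
        ∀ (T a b : ℝ), 0 < T → a < b →
        ∀ (E R G : ℝ → ℝ → ℝ → ℝ),
          Continuous (fun p : ℝ × ℝ × ℝ => E p.1 p.2.1 p.2.2) →
          Continuous (fun p : ℝ × ℝ × ℝ => R p.1 p.2.1 p.2.2) →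
          Continuous (fun p : ℝ × ℝ × ℝ => G p.1 p.2.1 p.2.2) →
          (∀ t x μ : ℝ, DifferentiableAt ℝ (fun s => E s x μ) t) →
          (∀ t x μ : ℝ, DifferentiableAt ℝ (fun y => E t y μ) x) →
          Continuous (fun p : ℝ × ℝ × ℝ => deriv (fun s => E s p.2.1 p.2.2) p.1) →
          Continuous (fun p : ℝ × ℝ × ℝ => deriv (fun y => E p.1 y p.2.2) p.2.1) →
          -- the error equation:
          (∀ t ∈ Icc 0 T, ∀ x ∈ Icc a b, ∀ μ ∈ Icc (-1:ℝ) 1,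
            ε * deriv (fun s => E s x μ) t + μ * deriv (fun y => E t y μ) x +
              (1 / ε) * (E t x μ - ∫ μ' in Icc (-1:ℝ) 1, κ μ μ' * E t x μ') =
                R t x μ + G t x μ) →
          (∀ t ∈ Icc 0 T, ∀ x ∈ Icc a b, (∫ μ in Icc (-1:ℝ) 1, R t x μ) = 0) →
          -- the scaled bounds on the data:
          (∫ s in Icc 0 T, ∫ x in Icc a b, ∫ μ in Icc (-1:ℝ) 1, (R s x μ) ^ 2) ≤
            C ^ 2 * ε ^ 4 →
          (∫ s in Icc 0 T,
            Real.sqrt (∫ x in Icc a b, ∫ μ in Icc (-1:ℝ) 1, (G s x μ) ^ 2)) ≤ C * ε ^ 3 →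
          (∫ x in Icc a b, ∫ μ in Icc (-1:ℝ) 1, (E 0 x μ) ^ 2) ≤ C * ε ^ 2 →
          (∫ s in Icc 0 T, ∫ μ in Icc (0:ℝ) 1, μ * (E s a μ) ^ 2) ≤ C * ε ^ 2 →
          (∫ s in Icc 0 T, ∫ μ in Icc (-1:ℝ) 0, |μ| * (E s b μ) ^ 2) ≤ C * ε ^ 2 →
          -- conclusion: uniform `O(√ε)` bound
          ∀ t ∈ Icc 0 T,
            Real.sqrt (∫ x in Icc a b, ∫ μ in Icc (-1:ℝ) 1, (E t x μ) ^ 2) ≤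
              C' * Real.sqrt ε := by
  refine ⟨2*C + Real.sqrt (3*C + C^2/(2*σ₀)), by positivity, ?_⟩
  intro κ hκm hκpos hκsym hκnorm hker hsg ε hε T a b hT hab E R G hEc hRc hGc hdt hdx hEtc hExc
    heq hR0 hRint hGint hE0 hBa hBb
  have hε0 : 0 < ε := hε.1
  have hε1 : ε ≤ 1 := hε.2
  -- global sup bound on the data
  obtain ⟨K, hK0, hKall⟩ : ∃ K : ℝ, 0 ≤ K ∧ ∀ s ∈ Icc (0:ℝ) T, ∀ x ∈ Icc a b,
      ∀ μ ∈ Icc (-1:ℝ) 1, |E s x μ| ≤ K ∧ |R s x μ| ≤ K ∧ |G s x μ| ≤ K ∧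
      |deriv (fun s' => E s' x μ) s| ≤ K ∧ |deriv (fun y => E s y μ) x| ≤ K := by
    have hcomp : IsCompact ((Icc (0:ℝ) T) ×ˢ (Icc a b) ×ˢ (Icc (-1:ℝ) 1)) :=
      isCompact_Icc.prod (isCompact_Icc.prod isCompact_Icc)
    have hcont : Continuous (fun p : ℝ × ℝ × ℝ => |E p.1 p.2.1 p.2.2| + |R p.1 p.2.1 p.2.2| +
        |G p.1 p.2.1 p.2.2| + |deriv (fun s' => E s' p.2.1 p.2.2) p.1| +
        |deriv (fun y => E p.1 y p.2.2) p.2.1|) :=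
      (((hEc.abs.add hRc.abs).add hGc.abs).add hEtc.abs).add hExc.abs
    have hne : ((Icc (0:ℝ) T) ×ˢ (Icc a b) ×ˢ (Icc (-1:ℝ) 1)).Nonempty := by
      refine ⟨(0, a, -1), ?_, ?_, ?_⟩ <;> simp [hT.le, hab.le]
    obtain ⟨z, hz, hzmax⟩ := hcomp.exists_isMaxOn hne hcont.continuousOn
    refine ⟨|E z.1 z.2.1 z.2.2| + |R z.1 z.2.1 z.2.2| + |G z.1 z.2.1 z.2.2| +
      |deriv (fun s' => E s' z.2.1 z.2.2) z.1| + |deriv (fun y => E z.1 y z.2.2) z.2.1|,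
      by positivity, ?_⟩
    intro s hs x hx μ hμ
    have h0 : ((s, x, μ) : ℝ × ℝ × ℝ) ∈ (Icc (0:ℝ) T) ×ˢ (Icc a b) ×ˢ (Icc (-1:ℝ) 1) :=
      ⟨hs, hx, hμ⟩
    have h := hzmax h0
    simp only [mem_setOf_eq] at h
    refine ⟨?_, ?_, ?_, ?_, ?_⟩ <;>
      nlinarith [abs_nonneg (E s x μ), abs_nonneg (R s x μ), abs_nonneg (G s x μ),
        abs_nonneg (deriv (fun s' => E s' x μ) s), abs_nonneg (deriv (fun y => E s y μ) x)]
  -- basic set facts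
  have mΛ : MeasurableSet (Icc (-1:ℝ) 1) := measurableSet_Icc
  have mΩ : MeasurableSet (Icc a b) := measurableSet_Icc
  have mIT : MeasurableSet (Icc (0:ℝ) T) := measurableSet_Icc
  have fΛ : volume (Icc (-1:ℝ) 1) < ⊤ := measure_Icc_lt_top
  have fΩ : volume (Icc a b) < ⊤ := measure_Icc_lt_top
  have fIT : volume (Icc (0:ℝ) T) < ⊤ := measure_Icc_lt_top
  have hvolΛ : (volume (Icc (-1:ℝ) 1)).toReal = 2 := by
    rw [Real.volume_Icc, ENNReal.toReal_ofReal (by norm_num : (0:ℝ) ≤ 1 - (-1))]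
    norm_num
  have hvolΩ : (volume (Icc a b)).toReal = b - a := by
    rw [Real.volume_Icc, ENNReal.toReal_ofReal (by linarith)]
  -- integrability of κ slices
  have hκint : ∀ μ ∈ Icc (-1:ℝ) 1,
      Integrable (fun μ' => κ μ μ') (volume.restrict (Icc (-1:ℝ) 1)) := by
    intro μ hμ
    by_contra h
    have h0 := integral_undef h
    rw [hκnorm μ hμ] at h0
    exact one_ne_zero h0
  -- continuity of slices
  have hEcont3 : ∀ s x : ℝ, Continuous (fun μ => E s x μ) := fun s x =>
    hEc.comp (continuous_const.prodMk (continuous_const.prodMk continuous_id))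
  have hGcont3 : ∀ s x : ℝ, Continuous (fun μ => G s x μ) := fun s x =>
    hGc.comp (continuous_const.prodMk (continuous_const.prodMk continuous_id))
  have hRcont3 : ∀ s x : ℝ, Continuous (fun μ => R s x μ) := fun s x =>
    hRc.comp (continuous_const.prodMk (continuous_const.prodMk continuous_id))
  -- bound for the collision integral
  have hΦbd : ∀ s ∈ Icc (0:ℝ) T, ∀ x ∈ Icc a b, ∀ μ ∈ Icc (-1:ℝ) 1,
      |∫ μ' in Icc (-1:ℝ) 1, κ μ μ' * E s x μ'| ≤ K := by
    intro s hs x hx μ hμ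
    have hκi := hκint μ hμ
    have hEi : Integrable (fun μ' => κ μ μ' * E s x μ') (volume.restrict (Icc (-1:ℝ) 1)) := by
      refine (hκi.mul_const K).mono
        ((hκm.of_uncurry_left.aemeasurable.aestronglyMeasurable).mul
          (hEcont3 s x).aestronglyMeasurable) ?_
      refine (ae_restrict_iff' mΛ).2 (ae_of_all _ fun μ' hμ' => ?_)
      rw [Real.norm_eq_abs, Real.norm_eq_abs, abs_mul, abs_mul,
        abs_of_nonneg (hκpos μ hμ μ' hμ'), abs_of_nonneg hK0]
      exact mul_le_mul_of_nonneg_left ((hKall s hs x hx μ' hμ').1) (hκpos μ hμ μ' hμ')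
    have h1 : |∫ μ' in Icc (-1:ℝ) 1, κ μ μ' * E s x μ'| ≤
        ∫ μ' in Icc (-1:ℝ) 1, |κ μ μ' * E s x μ'| := by
      simpa only [Real.norm_eq_abs] using norm_integral_le_integral_norm
        (μ := volume.restrict (Icc (-1:ℝ) 1)) (fun μ' => κ μ μ' * E s x μ')
    have h2 : ∫ μ' in Icc (-1:ℝ) 1, |κ μ μ' * E s x μ'| ≤
        ∫ μ' in Icc (-1:ℝ) 1, κ μ μ' * K := by
      refine setIntegral_mono_on hEi.abs (hκi.mul_const K) mΛ fun μ' hμ' => ?_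
      rw [abs_mul, abs_of_nonneg (hκpos μ hμ μ' hμ')]
      exact mul_le_mul_of_nonneg_left ((hKall s hs x hx μ' hμ').1) (hκpos μ hμ μ' hμ')
    have h3 : ∫ μ' in Icc (-1:ℝ) 1, κ μ μ' * K = K := by
      rw [integral_mul_const, hκnorm μ hμ, one_mul]
    linarith [h2.trans_eq h3]
  -- strong measurability
  have hEsm : StronglyMeasurable (fun p : ℝ × ℝ × ℝ => E p.1 p.2.1 p.2.2) :=
    hEc.stronglyMeasurable
  have hE2sm : StronglyMeasurable (fun p : ℝ × ℝ × ℝ => E p.1 p.2.1 p.2.2 ^ 2) :=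
    (hEc.pow 2).stronglyMeasurable
  have hG2sm : StronglyMeasurable (fun p : ℝ × ℝ × ℝ => G p.1 p.2.1 p.2.2 ^ 2) :=
    (hGc.pow 2).stronglyMeasurable
  have hR2sm : StronglyMeasurable (fun p : ℝ × ℝ × ℝ => R p.1 p.2.1 p.2.2 ^ 2) :=
    (hRc.pow 2).stronglyMeasurable
  have hΦsm : StronglyMeasurable (fun p : ℝ × ℝ × ℝ =>
      ∫ μ' in Icc (-1:ℝ) 1, κ p.2.2 μ' * E p.1 p.2.1 μ') := by
    have h0 : StronglyMeasurable (fun q : (ℝ × ℝ × ℝ) × ℝ =>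
        κ q.1.2.2 q.2 * E q.1.1 q.1.2.1 q.2) := by
      apply Measurable.stronglyMeasurable
      exact (hκm.comp ((measurable_fst.snd.snd).prodMk measurable_snd)).mul
        (hEc.measurable.comp ((measurable_fst.fst).prodMk
          ((measurable_fst.snd.fst).prodMk measurable_snd)))
    exact aux_sm_int' (volume.restrict (Icc (-1:ℝ) 1))
      (fun (p : ℝ × ℝ × ℝ) μ' => κ p.2.2 μ' * E p.1 p.2.1 μ') h0
  have hmsm : StronglyMeasurable (fun p : ℝ × ℝ => ∫ μ' in Icc (-1:ℝ) 1, E p.1 p.2 μ') := by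
    have h0 : StronglyMeasurable (fun q : (ℝ × ℝ) × ℝ => E q.1.1 q.1.2 q.2) :=
      (hEc.comp ((continuous_fst.fst).prodMk
        ((continuous_fst.snd).prodMk continuous_snd))).stronglyMeasurable
    exact aux_sm_int' (volume.restrict (Icc (-1:ℝ) 1)) (fun (p : ℝ × ℝ) μ' => E p.1 p.2 μ') h0
  -- squared bounds
  have hK2E : ∀ s ∈ Icc (0:ℝ) T, ∀ x ∈ Icc a b, ∀ μ ∈ Icc (-1:ℝ) 1, |E s x μ ^ 2| ≤ K ^ 2 := by
    intro s hs x hx μ hμ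
    rw [abs_pow]
    exact pow_le_pow_left₀ (abs_nonneg _) ((hKall s hs x hx μ hμ).1) 2
  have hK2G : ∀ s ∈ Icc (0:ℝ) T, ∀ x ∈ Icc a b, ∀ μ ∈ Icc (-1:ℝ) 1, |G s x μ ^ 2| ≤ K ^ 2 := by
    intro s hs x hx μ hμ
    rw [abs_pow]
    exact pow_le_pow_left₀ (abs_nonneg _) ((hKall s hs x hx μ hμ).2.2.1) 2
  have hK2R : ∀ s ∈ Icc (0:ℝ) T, ∀ x ∈ Icc a b, ∀ μ ∈ Icc (-1:ℝ) 1, |R s x μ ^ 2| ≤ K ^ 2 := by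
    intro s hs x hx μ hμ
    rw [abs_pow]
    exact pow_le_pow_left₀ (abs_nonneg _) ((hKall s hs x hx μ hμ).2.1) 2
  obtain ⟨hE2i, hE2mid, hE2out, hE2sm2, hE2sm1⟩ := aux_pack (Icc (0:ℝ) T) (Icc a b)
    (Icc (-1:ℝ) 1) mIT mΩ mΛ fIT fΩ fΛ (fun s x μ => E s x μ ^ 2) hE2sm (K ^ 2) hK2E
  obtain ⟨hG2i, hG2mid, hG2out, hG2sm2, hG2sm1⟩ := aux_pack (Icc (0:ℝ) T) (Icc a b)
    (Icc (-1:ℝ) 1) mIT mΩ mΛ fIT fΩ fΛ (fun s x μ => G s x μ ^ 2) hG2sm (K ^ 2) hK2G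
  obtain ⟨hR2i, hR2mid, hR2out, hR2sm2, hR2sm1⟩ := aux_pack (Icc (0:ℝ) T) (Icc a b)
    (Icc (-1:ℝ) 1) mIT mΩ mΛ fIT fΩ fΛ (fun s x μ => R s x μ ^ 2) hR2sm (K ^ 2) hK2R
  -- nonnegativity and bound of the energy
  have hFnn : ∀ s : ℝ, 0 ≤ ∫ x in Icc a b, ∫ μ in Icc (-1:ℝ) 1, E s x μ ^ 2 := fun s =>
    setIntegral_nonneg mΩ fun x _ => setIntegral_nonneg mΛ fun μ _ => sq_nonneg _
  have hGnn : ∀ s : ℝ, 0 ≤ ∫ x in Icc a b, ∫ μ in Icc (-1:ℝ) 1, G s x μ ^ 2 := fun s =>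
    setIntegral_nonneg mΩ fun x _ => setIntegral_nonneg mΛ fun μ _ => sq_nonneg _
  have hFnbd : ∀ s ∈ Icc (0:ℝ) T,
      (∫ x in Icc a b, ∫ μ in Icc (-1:ℝ) 1, E s x μ ^ 2) ≤ K ^ 2 * 2 * (b - a) := by
    intro s hs
    have h1 : ∀ x ∈ Icc a b, (∫ μ in Icc (-1:ℝ) 1, E s x μ ^ 2) ≤ K ^ 2 * 2 := by
      intro x hx
      have h := aux_intle (Icc (-1:ℝ) 1) mΛ fΛ (fun μ => E s x μ ^ 2) (K ^ 2)
        (hE2i s hs x hx) (fun μ hμ => by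
          have := hK2E s hs x hx μ hμ
          rwa [abs_of_nonneg (sq_nonneg _)] at this)
      rwa [hvolΛ] at h
    have h2 := aux_intle (Icc a b) mΩ fΩ _ (K ^ 2 * 2) (hE2mid s hs) h1
    rwa [hvolΩ] at h2
  -- the sup of the energy norms
  set M := sSup ((fun r =>
    Real.sqrt (∫ x in Icc a b, ∫ μ in Icc (-1:ℝ) 1, E r x μ ^ 2)) '' Icc (0:ℝ) T) with hMdef
  have hbdd : BddAbove ((fun r =>
      Real.sqrt (∫ x in Icc a b, ∫ μ in Icc (-1:ℝ) 1, E r x μ ^ 2)) '' Icc (0:ℝ) T) := by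
    refine ⟨Real.sqrt (K ^ 2 * 2 * (b - a)), ?_⟩
    rintro y ⟨s, hs, rfl⟩
    exact Real.sqrt_le_sqrt (hFnbd s hs)
  have hMge : ∀ s ∈ Icc (0:ℝ) T,
      Real.sqrt (∫ x in Icc a b, ∫ μ in Icc (-1:ℝ) 1, E s x μ ^ 2) ≤ M := fun s hs =>
    le_csSup hbdd ⟨s, hs, rfl⟩
  have hM0 : 0 ≤ M := le_trans (Real.sqrt_nonneg _) (hMge 0 ⟨le_refl 0, hT.le⟩)
  -- the master energy inequality
  have master : ∀ t ∈ Icc (0:ℝ) T,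
      (∫ x in Icc a b, ∫ μ in Icc (-1:ℝ) 1, E t x μ ^ 2) ≤
        C * ε ^ 2 + C ^ 2 / (2 * σ₀) * ε ^ 4 + 2 * M * C * ε ^ 2 + 2 * C * ε := by
    intro t ht
    have h0t : 0 ≤ t := ht.1
    have htT : t ≤ T := ht.2
    have hsub : Icc (0:ℝ) t ⊆ Icc (0:ℝ) T := Icc_subset_Icc le_rfl htT
    have mIt : MeasurableSet (Icc (0:ℝ) t) := measurableSet_Icc
    have fIt : volume (Icc (0:ℝ) t) < ⊤ := measure_Icc_lt_top
    have h0T : (0:ℝ) ∈ Icc (0:ℝ) T := ⟨le_refl 0, hT.le⟩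
    have hbmem : b ∈ Icc a b := right_mem_Icc.2 hab.le
    have hamem : a ∈ Icc a b := left_mem_Icc.2 hab.le
    haveI finΛi : IsFiniteMeasure (volume.restrict (Icc (-1:ℝ) 1)) :=
      ⟨by simpa [Measure.restrict_apply_univ] using fΛ⟩
    -- Young's inequality with the spectral-gap weight
    have hy : ∀ u v : ℝ, 0 ≤ u → 0 ≤ v →
        Real.sqrt u * Real.sqrt v ≤ σ₀/ε * u + ε/(4*σ₀) * v := by
      intro u v hu hv
      have h1 : Real.sqrt u ^ 2 = u := Real.sq_sqrt hu
      have h2 : Real.sqrt v ^ 2 = v := Real.sq_sqrt hv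
      have hx1 : Real.sqrt (σ₀/ε) ^ 2 = σ₀/ε := Real.sq_sqrt (by positivity)
      have hx2 : Real.sqrt (ε/(4*σ₀)) ^ 2 = ε/(4*σ₀) := Real.sq_sqrt (by positivity)
      have hcross : Real.sqrt (σ₀/ε) * Real.sqrt (ε/(4*σ₀)) = 1/2 := by
        rw [← Real.sqrt_mul (by positivity)]
        have h3 : σ₀/ε * (ε/(4*σ₀)) = 1/4 := by
          field_simp
        rw [h3, show (1/4:ℝ) = (1/2)^2 by norm_num, Real.sqrt_sq (by norm_num)]
      have step2 : 2 * (Real.sqrt (σ₀/ε) * Real.sqrt (ε/(4*σ₀))) * (Real.sqrt u * Real.sqrt v) ≤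
          Real.sqrt (σ₀/ε) ^ 2 * Real.sqrt u ^ 2 +
            Real.sqrt (ε/(4*σ₀)) ^ 2 * Real.sqrt v ^ 2 := by
        nlinarith [sq_nonneg (Real.sqrt (σ₀/ε) * Real.sqrt u -
          Real.sqrt (ε/(4*σ₀)) * Real.sqrt v)]
      rw [hx1, hx2, h1, h2, hcross] at step2
      linarith
    -- continuity / measurability of the integrands
    have hA1c : Continuous (fun p : ℝ × ℝ × ℝ =>
        ε * (E p.1 p.2.1 p.2.2 * deriv (fun s' => E s' p.2.1 p.2.2) p.1)) :=
      continuous_const.mul (hEc.mul hEtc)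
    have hA2c : Continuous (fun p : ℝ × ℝ × ℝ =>
        p.2.2 * (E p.1 p.2.1 p.2.2 * deriv (fun y => E p.1 y p.2.2) p.2.1)) :=
      (continuous_snd.snd).mul (hEc.mul hExc)
    have hA3sm : StronglyMeasurable (fun p : ℝ × ℝ × ℝ =>
        (1/ε) * (E p.1 p.2.1 p.2.2 *
          (E p.1 p.2.1 p.2.2 - ∫ μ' in Icc (-1:ℝ) 1, κ p.2.2 μ' * E p.1 p.2.1 μ'))) :=
      (hEsm.mul (hEsm.sub hΦsm)).const_mul (1/ε)
    have hERc : Continuous (fun p : ℝ × ℝ × ℝ => E p.1 p.2.1 p.2.2 * R p.1 p.2.1 p.2.2) :=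
      hEc.mul hRc
    have hEGc : Continuous (fun p : ℝ × ℝ × ℝ => E p.1 p.2.1 p.2.2 * G p.1 p.2.1 p.2.2) :=
      hEc.mul hGc
    -- bounds of the integrands
    have hA1b : ∀ s ∈ Icc (0:ℝ) t, ∀ x ∈ Icc a b, ∀ μ ∈ Icc (-1:ℝ) 1,
        |ε * (E s x μ * deriv (fun s' => E s' x μ) s)| ≤ K ^ 2 := by
      intro s hs x hx μ hμ
      obtain ⟨h1, -, -, h4, -⟩ := hKall s (hsub hs) x hx μ hμ
      rw [abs_mul, abs_mul, abs_of_nonneg hε0.le]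
      nlinarith [abs_nonneg (E s x μ), abs_nonneg (deriv (fun s' => E s' x μ) s),
        mul_le_mul h1 h4 (abs_nonneg _) hK0,
        mul_nonneg (abs_nonneg (E s x μ)) (abs_nonneg (deriv (fun s' => E s' x μ) s))]
    have hA2b : ∀ s ∈ Icc (0:ℝ) t, ∀ x ∈ Icc a b, ∀ μ ∈ Icc (-1:ℝ) 1,
        |μ * (E s x μ * deriv (fun y => E s y μ) x)| ≤ K ^ 2 := by
      intro s hs x hx μ hμ
      obtain ⟨h1, -, -, -, h5⟩ := hKall s (hsub hs) x hx μ hμ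
      have hμ1 : |μ| ≤ 1 := abs_le.2 ⟨hμ.1, hμ.2⟩
      rw [abs_mul, abs_mul]
      nlinarith [abs_nonneg μ, abs_nonneg (E s x μ), abs_nonneg (deriv (fun y => E s y μ) x),
        mul_le_mul h1 h5 (abs_nonneg _) hK0,
        mul_nonneg (abs_nonneg (E s x μ)) (abs_nonneg (deriv (fun y => E s y μ) x))]
    have hA3b : ∀ s ∈ Icc (0:ℝ) t, ∀ x ∈ Icc a b, ∀ μ ∈ Icc (-1:ℝ) 1,
        |(1/ε) * (E s x μ * (E s x μ - ∫ μ' in Icc (-1:ℝ) 1, κ μ μ' * E s x μ'))| ≤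
          1/ε * (2 * K ^ 2) := by
      intro s hs x hx μ hμ
      obtain ⟨h1, -, -, -, -⟩ := hKall s (hsub hs) x hx μ hμ
      have h2 := hΦbd s (hsub hs) x hx μ hμ
      rw [abs_mul, abs_mul, abs_of_nonneg (by positivity : (0:ℝ) ≤ 1/ε)]
      have h3 : |E s x μ - ∫ μ' in Icc (-1:ℝ) 1, κ μ μ' * E s x μ'| ≤ 2 * K :=
        (abs_sub _ _).trans (by linarith)
      have h4 : |E s x μ| * |E s x μ - ∫ μ' in Icc (-1:ℝ) 1, κ μ μ' * E s x μ'| ≤ K * (2 * K) :=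
        mul_le_mul h1 h3 (abs_nonneg _) hK0
      have h5 : (0:ℝ) ≤ 1/ε := by positivity
      nlinarith [h4, h5]
    have hERb : ∀ s ∈ Icc (0:ℝ) t, ∀ x ∈ Icc a b, ∀ μ ∈ Icc (-1:ℝ) 1,
        |E s x μ * R s x μ| ≤ K ^ 2 := by
      intro s hs x hx μ hμ
      obtain ⟨h1, h2, -, -, -⟩ := hKall s (hsub hs) x hx μ hμ
      rw [abs_mul]
      nlinarith [abs_nonneg (E s x μ), abs_nonneg (R s x μ),
        mul_le_mul h1 h2 (abs_nonneg _) hK0]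
    have hEGb : ∀ s ∈ Icc (0:ℝ) t, ∀ x ∈ Icc a b, ∀ μ ∈ Icc (-1:ℝ) 1,
        |E s x μ * G s x μ| ≤ K ^ 2 := by
      intro s hs x hx μ hμ
      obtain ⟨h1, -, h2, -, -⟩ := hKall s (hsub hs) x hx μ hμ
      rw [abs_mul]
      nlinarith [abs_nonneg (E s x μ), abs_nonneg (G s x μ),
        mul_le_mul h1 h2 (abs_nonneg _) hK0]
    -- integrability packages over the box [0,t] × [a,b] × [-1,1]
    obtain ⟨hA1i, hA1mid, hA1out, hA1sm2, hA1sm1⟩ := aux_pack (Icc (0:ℝ) t) (Icc a b)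
      (Icc (-1:ℝ) 1) mIt mΩ mΛ fIt fΩ fΛ _ hA1c.stronglyMeasurable (K ^ 2) hA1b
    obtain ⟨hA2i, hA2mid, hA2out, hA2sm2, hA2sm1⟩ := aux_pack (Icc (0:ℝ) t) (Icc a b)
      (Icc (-1:ℝ) 1) mIt mΩ mΛ fIt fΩ fΛ _ hA2c.stronglyMeasurable (K ^ 2) hA2b
    obtain ⟨hA3i, hA3mid, hA3out, hA3sm2, hA3sm1⟩ := aux_pack (Icc (0:ℝ) t) (Icc a b)
      (Icc (-1:ℝ) 1) mIt mΩ mΛ fIt fΩ fΛ _ hA3sm (1/ε * (2 * K ^ 2)) hA3b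
    obtain ⟨hERi, hERmid, hERout, hERsm2, hERsm1⟩ := aux_pack (Icc (0:ℝ) t) (Icc a b)
      (Icc (-1:ℝ) 1) mIt mΩ mΛ fIt fΩ fΛ _ hERc.stronglyMeasurable (K ^ 2) hERb
    obtain ⟨hEGi, hEGmid, hEGout, hEGsm2, hEGsm1⟩ := aux_pack (Icc (0:ℝ) t) (Icc a b)
      (Icc (-1:ℝ) 1) mIt mΩ mΛ fIt fΩ fΛ _ hEGc.stronglyMeasurable (K ^ 2) hEGb
    -- pointwise identity, integrated
    have hpt : ∀ s ∈ Icc (0:ℝ) t, ∀ x ∈ Icc a b, ∀ μ ∈ Icc (-1:ℝ) 1,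
        ε * (E s x μ * deriv (fun s' => E s' x μ) s) +
          μ * (E s x μ * deriv (fun y => E s y μ) x) +
          (1/ε) * (E s x μ * (E s x μ - ∫ μ' in Icc (-1:ℝ) 1, κ μ μ' * E s x μ')) =
          E s x μ * R s x μ + E s x μ * G s x μ := by
      intro s hs x hx μ hμ
      have h := heq s (hsub hs) x hx μ hμ
      linear_combination E s x μ * h
    have hcong : (∫ s in Icc (0:ℝ) t, ∫ x in Icc a b, ∫ μ in Icc (-1:ℝ) 1,
        (ε * (E s x μ * deriv (fun s' => E s' x μ) s) +
          μ * (E s x μ * deriv (fun y => E s y μ) x) +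
          (1/ε) * (E s x μ * (E s x μ - ∫ μ' in Icc (-1:ℝ) 1, κ μ μ' * E s x μ')))) =
        ∫ s in Icc (0:ℝ) t, ∫ x in Icc a b, ∫ μ in Icc (-1:ℝ) 1,
          (E s x μ * R s x μ + E s x μ * G s x μ) := by
      refine setIntegral_congr_fun mIt fun s hs => ?_
      refine setIntegral_congr_fun mΩ fun x hx => ?_
      refine setIntegral_congr_fun mΛ fun μ hμ => ?_
      exact hpt s hs x hx μ hμ
    have hsplitL1 : (∫ s in Icc (0:ℝ) t, ∫ x in Icc a b, ∫ μ in Icc (-1:ℝ) 1,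
        (ε * (E s x μ * deriv (fun s' => E s' x μ) s) +
          μ * (E s x μ * deriv (fun y => E s y μ) x) +
          (1/ε) * (E s x μ * (E s x μ - ∫ μ' in Icc (-1:ℝ) 1, κ μ μ' * E s x μ')))) =
        (∫ s in Icc (0:ℝ) t, ∫ x in Icc a b, ∫ μ in Icc (-1:ℝ) 1,
          (ε * (E s x μ * deriv (fun s' => E s' x μ) s) +
            μ * (E s x μ * deriv (fun y => E s y μ) x))) +
        ∫ s in Icc (0:ℝ) t, ∫ x in Icc a b, ∫ μ in Icc (-1:ℝ) 1,
          (1/ε) * (E s x μ * (E s x μ - ∫ μ' in Icc (-1:ℝ) 1, κ μ μ' * E s x μ')) := by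
      refine aux_add2 (Icc (0:ℝ) t) (Icc a b) (Icc (-1:ℝ) 1) mIt mΩ mΛ fIt fΩ fΛ
        (fun s x μ => ε * (E s x μ * deriv (fun s' => E s' x μ) s) +
          μ * (E s x μ * deriv (fun y => E s y μ) x))
        (fun s x μ => (1/ε) * (E s x μ * (E s x μ - ∫ μ' in Icc (-1:ℝ) 1, κ μ μ' * E s x μ')))
        (hA1c.add hA2c).stronglyMeasurable hA3sm (K ^ 2 + K ^ 2) (1/ε * (2 * K ^ 2)) ?_ ?_
      · intro s hs x hx μ hμ
        exact (abs_add_le _ _).trans (add_le_add (hA1b s hs x hx μ hμ) (hA2b s hs x hx μ hμ))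
      · exact hA3b
    have hsplitL2 : (∫ s in Icc (0:ℝ) t, ∫ x in Icc a b, ∫ μ in Icc (-1:ℝ) 1,
        (ε * (E s x μ * deriv (fun s' => E s' x μ) s) +
          μ * (E s x μ * deriv (fun y => E s y μ) x))) =
        (∫ s in Icc (0:ℝ) t, ∫ x in Icc a b, ∫ μ in Icc (-1:ℝ) 1,
          ε * (E s x μ * deriv (fun s' => E s' x μ) s)) +
        ∫ s in Icc (0:ℝ) t, ∫ x in Icc a b, ∫ μ in Icc (-1:ℝ) 1,
          μ * (E s x μ * deriv (fun y => E s y μ) x) :=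
      aux_add2 (Icc (0:ℝ) t) (Icc a b) (Icc (-1:ℝ) 1) mIt mΩ mΛ fIt fΩ fΛ
        (fun s x μ => ε * (E s x μ * deriv (fun s' => E s' x μ) s))
        (fun s x μ => μ * (E s x μ * deriv (fun y => E s y μ) x))
        hA1c.stronglyMeasurable hA2c.stronglyMeasurable (K ^ 2) (K ^ 2) hA1b hA2b
    have hsplitR : (∫ s in Icc (0:ℝ) t, ∫ x in Icc a b, ∫ μ in Icc (-1:ℝ) 1,
        (E s x μ * R s x μ + E s x μ * G s x μ)) =
        (∫ s in Icc (0:ℝ) t, ∫ x in Icc a b, ∫ μ in Icc (-1:ℝ) 1, E s x μ * R s x μ) +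
        ∫ s in Icc (0:ℝ) t, ∫ x in Icc a b, ∫ μ in Icc (-1:ℝ) 1, E s x μ * G s x μ :=
      aux_add2 (Icc (0:ℝ) t) (Icc a b) (Icc (-1:ℝ) 1) mIt mΩ mΛ fIt fΩ fΛ
        (fun s x μ => E s x μ * R s x μ) (fun s x μ => E s x μ * G s x μ)
        hERc.stronglyMeasurable hEGc.stronglyMeasurable (K ^ 2) (K ^ 2) hERb hEGb
    have hIdent : (∫ s in Icc (0:ℝ) t, ∫ x in Icc a b, ∫ μ in Icc (-1:ℝ) 1,
        ε * (E s x μ * deriv (fun s' => E s' x μ) s)) +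
        (∫ s in Icc (0:ℝ) t, ∫ x in Icc a b, ∫ μ in Icc (-1:ℝ) 1,
          μ * (E s x μ * deriv (fun y => E s y μ) x)) +
        (∫ s in Icc (0:ℝ) t, ∫ x in Icc a b, ∫ μ in Icc (-1:ℝ) 1,
          (1/ε) * (E s x μ * (E s x μ - ∫ μ' in Icc (-1:ℝ) 1, κ μ μ' * E s x μ'))) =
        (∫ s in Icc (0:ℝ) t, ∫ x in Icc a b, ∫ μ in Icc (-1:ℝ) 1, E s x μ * R s x μ) +
        ∫ s in Icc (0:ℝ) t, ∫ x in Icc a b, ∫ μ in Icc (-1:ℝ) 1, E s x μ * G s x μ := by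
      rw [← hsplitR, ← hcong, hsplitL1, hsplitL2]
    -- the time-derivative term via FTC
    have hA1midb : ∀ s ∈ Icc (0:ℝ) t, ∀ x ∈ Icc a b,
        |∫ μ in Icc (-1:ℝ) 1, ε * (E s x μ * deriv (fun s' => E s' x μ) s)| ≤ K ^ 2 * 2 := by
      intro s hs x hx
      have h := aux_bdInner (Icc (-1:ℝ) 1) mΛ fΛ _ (K ^ 2) (hA1i s hs x hx) (hA1b s hs x hx)
      rwa [hvolΛ] at h
    have hswap1 : (∫ s in Icc (0:ℝ) t, ∫ x in Icc a b, ∫ μ in Icc (-1:ℝ) 1,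
        ε * (E s x μ * deriv (fun s' => E s' x μ) s)) =
        ∫ x in Icc a b, ∫ s in Icc (0:ℝ) t, ∫ μ in Icc (-1:ℝ) 1,
          ε * (E s x μ * deriv (fun s' => E s' x μ) s) :=
      aux_swap (Icc (0:ℝ) t) (Icc a b) mIt mΩ fIt fΩ
        (fun s x => ∫ μ in Icc (-1:ℝ) 1, ε * (E s x μ * deriv (fun s' => E s' x μ) s))
        hA1sm2 (K ^ 2 * 2) hA1midb
    have hswap1' : ∀ x ∈ Icc a b, (∫ s in Icc (0:ℝ) t, ∫ μ in Icc (-1:ℝ) 1,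
        ε * (E s x μ * deriv (fun s' => E s' x μ) s)) =
        ∫ μ in Icc (-1:ℝ) 1, ∫ s in Icc (0:ℝ) t,
          ε * (E s x μ * deriv (fun s' => E s' x μ) s) := by
      intro x hx
      refine aux_swap (Icc (0:ℝ) t) (Icc (-1:ℝ) 1) mIt mΛ fIt fΛ
        (fun s μ => ε * (E s x μ * deriv (fun s' => E s' x μ) s))
        ((hA1c.comp (continuous_fst.prodMk
          (continuous_const.prodMk continuous_snd))).stronglyMeasurable) (K ^ 2) ?_
      intro s hs μ hμ
      exact hA1b s hs x hx μ hμ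
    have hftc1 : ∀ x ∈ Icc a b, ∀ μ ∈ Icc (-1:ℝ) 1,
        (∫ s in Icc (0:ℝ) t, ε * (E s x μ * deriv (fun s' => E s' x μ) s)) =
          ε * (E t x μ ^ 2 / 2 - E 0 x μ ^ 2 / 2) := by
      intro x hx μ hμ
      rw [integral_const_mul]
      congr 1
      exact aux_ftc 0 t h0t (fun s => E s x μ) (fun s => hdt s x μ)
        ((hEc.comp (continuous_id.prodMk (continuous_const.prodMk continuous_const))).mul
          (hEtc.comp (continuous_id.prodMk (continuous_const.prodMk continuous_const))))
    have hS1 : (∫ s in Icc (0:ℝ) t, ∫ x in Icc a b, ∫ μ in Icc (-1:ℝ) 1,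
        ε * (E s x μ * deriv (fun s' => E s' x μ) s)) =
        ε/2 * (∫ x in Icc a b, ∫ μ in Icc (-1:ℝ) 1, E t x μ ^ 2) -
        ε/2 * (∫ x in Icc a b, ∫ μ in Icc (-1:ℝ) 1, E 0 x μ ^ 2) := by
      rw [hswap1]
      have h1 : ∀ x ∈ Icc a b, (∫ s in Icc (0:ℝ) t, ∫ μ in Icc (-1:ℝ) 1,
          ε * (E s x μ * deriv (fun s' => E s' x μ) s)) =
          ε/2 * (∫ μ in Icc (-1:ℝ) 1, E t x μ ^ 2) -
          ε/2 * (∫ μ in Icc (-1:ℝ) 1, E 0 x μ ^ 2) := by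
        intro x hx
        rw [hswap1' x hx, setIntegral_congr_fun mΛ (fun μ hμ => hftc1 x hx μ hμ)]
        have h2 : (fun μ => ε * (E t x μ ^ 2 / 2 - E 0 x μ ^ 2 / 2)) =
            fun μ => ε/2 * E t x μ ^ 2 - ε/2 * E 0 x μ ^ 2 := by
          funext μ; ring
        rw [h2, integral_sub ((hE2i t ht x hx).const_mul (ε/2))
          ((hE2i 0 h0T x hx).const_mul (ε/2)), integral_const_mul, integral_const_mul]
      rw [setIntegral_congr_fun mΩ h1,
        integral_sub ((hE2mid t ht).const_mul (ε/2)) ((hE2mid 0 h0T).const_mul (ε/2)),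
        integral_const_mul, integral_const_mul]
    -- the transport term via FTC in x
    have hS2 : (∫ s in Icc (0:ℝ) t, ∫ x in Icc a b, ∫ μ in Icc (-1:ℝ) 1,
        μ * (E s x μ * deriv (fun y => E s y μ) x)) =
        ∫ s in Icc (0:ℝ) t, ∫ μ in Icc (-1:ℝ) 1,
          μ * (E s b μ ^ 2 / 2 - E s a μ ^ 2 / 2) := by
      refine setIntegral_congr_fun mIt fun s hs => ?_
      rw [aux_swap (Icc a b) (Icc (-1:ℝ) 1) mΩ mΛ fΩ fΛ
        (fun x μ => μ * (E s x μ * deriv (fun y => E s y μ) x))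
        ((hA2c.comp (continuous_const.prodMk
          (continuous_fst.prodMk continuous_snd))).stronglyMeasurable) (K ^ 2)
        (fun x hx μ hμ => hA2b s hs x hx μ hμ)]
      refine setIntegral_congr_fun mΛ fun μ hμ => ?_
      rw [integral_const_mul]
      congr 1
      exact aux_ftc a b hab.le (fun y => E s y μ) (fun y => hdx s y μ)
        ((hEc.comp (continuous_const.prodMk (continuous_id.prodMk continuous_const))).mul
          (hExc.comp (continuous_const.prodMk (continuous_id.prodMk continuous_const))))
    -- boundary terms: lower bound
    have mIm10 : MeasurableSet (Icc (-1:ℝ) 0) := measurableSet_Icc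
    have mI01 : MeasurableSet (Icc (0:ℝ) 1) := measurableSet_Icc
    have fIm10 : volume (Icc (-1:ℝ) 0) < ⊤ := measure_Icc_lt_top
    have fI01 : volume (Icc (0:ℝ) 1) < ⊤ := measure_Icc_lt_top
    have hvol10 : (volume (Icc (-1:ℝ) 0)).toReal = 1 := by
      rw [Real.volume_Icc, ENNReal.toReal_ofReal (by norm_num : (0:ℝ) ≤ 0 - (-1))]
      norm_num
    have hvol01 : (volume (Icc (0:ℝ) 1)).toReal = 1 := by
      rw [Real.volume_Icc, ENNReal.toReal_ofReal (by norm_num : (0:ℝ) ≤ 1 - 0)]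
      norm_num
    have hW1sm : StronglyMeasurable (fun s : ℝ => ∫ μ in Icc (-1:ℝ) 0, |μ| * E s b μ ^ 2) :=
      aux_sm_int' (volume.restrict (Icc (-1:ℝ) 0)) (fun s μ => |μ| * E s b μ ^ 2)
        ((continuous_snd.abs.mul ((hEc.comp (continuous_fst.prodMk
          (continuous_const.prodMk continuous_snd))).pow 2)).stronglyMeasurable)
    have hW2sm : StronglyMeasurable (fun s : ℝ => ∫ μ in Icc (0:ℝ) 1, μ * E s a μ ^ 2) :=
      aux_sm_int' (volume.restrict (Icc (0:ℝ) 1)) (fun s μ => μ * E s a μ ^ 2)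
        ((continuous_snd.mul ((hEc.comp (continuous_fst.prodMk
          (continuous_const.prodMk continuous_snd))).pow 2)).stronglyMeasurable)
    have hW1b : ∀ s ∈ Icc (0:ℝ) T, |∫ μ in Icc (-1:ℝ) 0, |μ| * E s b μ ^ 2| ≤ K ^ 2 * 1 := by
      intro s hs
      have hc : Continuous (fun μ : ℝ => |μ| * E s b μ ^ 2) :=
        continuous_abs.mul ((hEcont3 s b).pow 2)
      have hbd : ∀ μ ∈ Icc (-1:ℝ) 0, |(|μ| * E s b μ ^ 2)| ≤ K ^ 2 := by
        intro μ hμ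
        have hμΛ : μ ∈ Icc (-1:ℝ) 1 := ⟨hμ.1, hμ.2.trans (by norm_num)⟩
        have h1 := (hKall s hs b hbmem μ hμΛ).1
        have hμ1 : |μ| ≤ 1 := abs_le.2 ⟨hμ.1, hμ.2.trans (by norm_num)⟩
        rw [abs_mul, abs_abs, abs_of_nonneg (sq_nonneg (E s b μ))]
        nlinarith [abs_nonneg μ, abs_nonneg (E s b μ), sq_abs (E s b μ), sq_nonneg (E s b μ)]
      have h := aux_bdInner (Icc (-1:ℝ) 0) mIm10 fIm10 _ (K ^ 2) hc.integrableOn_Icc hbd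
      rwa [hvol10] at h
    have hW2b : ∀ s ∈ Icc (0:ℝ) T, |∫ μ in Icc (0:ℝ) 1, μ * E s a μ ^ 2| ≤ K ^ 2 * 1 := by
      intro s hs
      have hc : Continuous (fun μ : ℝ => μ * E s a μ ^ 2) :=
        continuous_id.mul ((hEcont3 s a).pow 2)
      have hbd : ∀ μ ∈ Icc (0:ℝ) 1, |μ * E s a μ ^ 2| ≤ K ^ 2 := by
        intro μ hμ
        have hμΛ : μ ∈ Icc (-1:ℝ) 1 := ⟨le_trans (by norm_num) hμ.1, hμ.2⟩
        have h1 := (hKall s hs a hamem μ hμΛ).1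
        have hμ1 : |μ| ≤ 1 := abs_le.2 ⟨le_trans (by norm_num) hμ.1, hμ.2⟩
        rw [abs_mul, abs_of_nonneg (sq_nonneg (E s a μ))]
        nlinarith [abs_nonneg μ, abs_nonneg (E s a μ), sq_abs (E s a μ), sq_nonneg (E s a μ)]
      have h := aux_bdInner (Icc (0:ℝ) 1) mI01 fI01 _ (K ^ 2) hc.integrableOn_Icc hbd
      rwa [hvol01] at h
    have hper : ∀ s ∈ Icc (0:ℝ) t,
        -(1/2) * ((∫ μ in Icc (-1:ℝ) 0, |μ| * E s b μ ^ 2) +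
          ∫ μ in Icc (0:ℝ) 1, μ * E s a μ ^ 2) ≤
        ∫ μ in Icc (-1:ℝ) 1, μ * (E s b μ ^ 2 / 2 - E s a μ ^ 2 / 2) := by
      intro s hs
      have hcb : Continuous (fun μ : ℝ => μ * E s b μ ^ 2) :=
        continuous_id.mul ((hEcont3 s b).pow 2)
      have hca : Continuous (fun μ : ℝ => μ * E s a μ ^ 2) :=
        continuous_id.mul ((hEcont3 s a).pow 2)
      have hdisj : Disjoint (Icc (-1:ℝ) 0) (Ioc (0:ℝ) 1) := by
        rw [Set.disjoint_left]
        rintro μ ⟨-, h2⟩ ⟨h3, -⟩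
        linarith
      have hunion : Icc (-1:ℝ) 0 ∪ Ioc (0:ℝ) 1 = Icc (-1:ℝ) 1 :=
        Icc_union_Ioc_eq_Icc (by norm_num) (by norm_num)
      have hsplitb : (∫ μ in Icc (-1:ℝ) 1, μ * E s b μ ^ 2) =
          (∫ μ in Icc (-1:ℝ) 0, μ * E s b μ ^ 2) + ∫ μ in Ioc (0:ℝ) 1, μ * E s b μ ^ 2 := by
        rw [← hunion]
        exact setIntegral_union hdisj measurableSet_Ioc hcb.integrableOn_Icc
          (hcb.integrableOn_Icc.mono_set Ioc_subset_Icc_self)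
      have hsplita : (∫ μ in Icc (-1:ℝ) 1, μ * E s a μ ^ 2) =
          (∫ μ in Icc (-1:ℝ) 0, μ * E s a μ ^ 2) + ∫ μ in Ioc (0:ℝ) 1, μ * E s a μ ^ 2 := by
        rw [← hunion]
        exact setIntegral_union hdisj measurableSet_Ioc hca.integrableOn_Icc
          (hca.integrableOn_Icc.mono_set Ioc_subset_Icc_self)
      have hb1 : (∫ μ in Icc (-1:ℝ) 0, μ * E s b μ ^ 2) =
          -(∫ μ in Icc (-1:ℝ) 0, |μ| * E s b μ ^ 2) := by
        rw [← integral_neg]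
        refine setIntegral_congr_fun mIm10 fun μ hμ => ?_
        rw [abs_of_nonpos hμ.2]
        ring
      have hb2 : 0 ≤ ∫ μ in Ioc (0:ℝ) 1, μ * E s b μ ^ 2 :=
        setIntegral_nonneg measurableSet_Ioc fun μ hμ => mul_nonneg hμ.1.le (sq_nonneg _)
      have ha1 : (∫ μ in Icc (-1:ℝ) 0, μ * E s a μ ^ 2) ≤ 0 := by
        have h2 : (fun μ : ℝ => -μ * E s a μ ^ 2) = fun μ => -(μ * E s a μ ^ 2) := by
          funext μ; ring
        have h : (0:ℝ) ≤ ∫ μ in Icc (-1:ℝ) 0, -μ * E s a μ ^ 2 :=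
          setIntegral_nonneg mIm10 (fun μ (hμ : μ ∈ Icc (-1:ℝ) 0) =>
            (mul_nonneg (neg_nonneg.2 hμ.2) (sq_nonneg (E s a μ)) : 0 ≤ -μ * E s a μ ^ 2))
        rw [h2, integral_neg] at h
        linarith
      have ha2 : (∫ μ in Ioc (0:ℝ) 1, μ * E s a μ ^ 2) = ∫ μ in Icc (0:ℝ) 1, μ * E s a μ ^ 2 :=
        integral_Icc_eq_integral_Ioc.symm
      have htarg : (∫ μ in Icc (-1:ℝ) 1, μ * (E s b μ ^ 2 / 2 - E s a μ ^ 2 / 2)) =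
          (1/2) * (∫ μ in Icc (-1:ℝ) 1, μ * E s b μ ^ 2) -
          (1/2) * (∫ μ in Icc (-1:ℝ) 1, μ * E s a μ ^ 2) := by
        have h2 : (fun μ => μ * (E s b μ ^ 2 / 2 - E s a μ ^ 2 / 2)) =
            fun μ => (1/2) * (μ * E s b μ ^ 2) - (1/2) * (μ * E s a μ ^ 2) := by
          funext μ; ring
        rw [h2, integral_sub (hcb.integrableOn_Icc.const_mul _)
          (hca.integrableOn_Icc.const_mul _), integral_const_mul, integral_const_mul]
      rw [htarg, hsplitb, hsplita, hb1]
      rw [ha2] at *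
      linarith [hb2, ha1, ha2]
    have hInsm : StronglyMeasurable (fun s : ℝ =>
        ∫ μ in Icc (-1:ℝ) 1, μ * (E s b μ ^ 2 / 2 - E s a μ ^ 2 / 2)) :=
      aux_sm_int' (volume.restrict (Icc (-1:ℝ) 1))
        (fun s μ => μ * (E s b μ ^ 2 / 2 - E s a μ ^ 2 / 2))
        ((continuous_snd.mul ((((hEc.comp (continuous_fst.prodMk (continuous_const.prodMk
          continuous_snd))).pow 2).div_const 2).sub (((hEc.comp (continuous_fst.prodMk
          (continuous_const.prodMk continuous_snd))).pow 2).div_const 2))).stronglyMeasurable)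
    have hInb : ∀ s ∈ Icc (0:ℝ) t,
        |∫ μ in Icc (-1:ℝ) 1, μ * (E s b μ ^ 2 / 2 - E s a μ ^ 2 / 2)| ≤ K ^ 2 * 2 := by
      intro s hs
      have hci : Continuous (fun μ : ℝ => μ * (E s b μ ^ 2 / 2 - E s a μ ^ 2 / 2)) :=
        continuous_id.mul ((((hEcont3 s b).pow 2).div_const 2).sub
          (((hEcont3 s a).pow 2).div_const 2))
      have hbd : ∀ μ ∈ Icc (-1:ℝ) 1, |μ * (E s b μ ^ 2 / 2 - E s a μ ^ 2 / 2)| ≤ K ^ 2 := by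
        intro μ hμ
        have h1 := (hKall s (hsub hs) b hbmem μ hμ).1
        have h2 := (hKall s (hsub hs) a hamem μ hμ).1
        have hμ1 : |μ| ≤ 1 := abs_le.2 ⟨hμ.1, hμ.2⟩
        have e1 : E s b μ ^ 2 ≤ K ^ 2 := by nlinarith [abs_nonneg (E s b μ), sq_abs (E s b μ)]
        have e2 : E s a μ ^ 2 ≤ K ^ 2 := by nlinarith [abs_nonneg (E s a μ), sq_abs (E s a μ)]
        have h3 : |E s b μ ^ 2 / 2 - E s a μ ^ 2 / 2| ≤ K ^ 2 := by
          rw [abs_le]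
          constructor <;> nlinarith [sq_nonneg (E s b μ), sq_nonneg (E s a μ)]
        rw [abs_mul]
        nlinarith [abs_nonneg μ, abs_nonneg (E s b μ ^ 2 / 2 - E s a μ ^ 2 / 2)]
      have h := aux_bdInner (Icc (-1:ℝ) 1) mΛ fΛ _ (K ^ 2) hci.integrableOn_Icc hbd
      rwa [hvolΛ] at h
    have hW1iT : Integrable (fun s => ∫ μ in Icc (-1:ℝ) 0, |μ| * E s b μ ^ 2)
        (volume.restrict (Icc (0:ℝ) T)) :=
      aux_intS2 _ mIT fIT _ hW1sm.aestronglyMeasurable (K ^ 2 * 1) hW1b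
    have hW2iT : Integrable (fun s => ∫ μ in Icc (0:ℝ) 1, μ * E s a μ ^ 2)
        (volume.restrict (Icc (0:ℝ) T)) :=
      aux_intS2 _ mIT fIT _ hW2sm.aestronglyMeasurable (K ^ 2 * 1) hW2b
    have hW1it : Integrable (fun s => ∫ μ in Icc (-1:ℝ) 0, |μ| * E s b μ ^ 2)
        (volume.restrict (Icc (0:ℝ) t)) :=
      aux_intS2 _ mIt fIt _ hW1sm.aestronglyMeasurable (K ^ 2 * 1) (fun s hs => hW1b s (hsub hs))
    have hW2it : Integrable (fun s => ∫ μ in Icc (0:ℝ) 1, μ * E s a μ ^ 2)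
        (volume.restrict (Icc (0:ℝ) t)) :=
      aux_intS2 _ mIt fIt _ hW2sm.aestronglyMeasurable (K ^ 2 * 1) (fun s hs => hW2b s (hsub hs))
    have hS2lb : -(C * ε ^ 2) ≤
        ∫ s in Icc (0:ℝ) t, ∫ μ in Icc (-1:ℝ) 1, μ * (E s b μ ^ 2 / 2 - E s a μ ^ 2 / 2) := by
      have intL : Integrable (fun s => -(1/2) * ((∫ μ in Icc (-1:ℝ) 0, |μ| * E s b μ ^ 2) +
          ∫ μ in Icc (0:ℝ) 1, μ * E s a μ ^ 2)) (volume.restrict (Icc (0:ℝ) t)) :=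
        (hW1it.add hW2it).const_mul (-(1/2))
      have intR : Integrable (fun s => ∫ μ in Icc (-1:ℝ) 1,
          μ * (E s b μ ^ 2 / 2 - E s a μ ^ 2 / 2)) (volume.restrict (Icc (0:ℝ) t)) :=
        aux_intS2 _ mIt fIt _ hInsm.aestronglyMeasurable (K ^ 2 * 2) hInb
      have hmono := setIntegral_mono_on intL intR mIt hper
      have hLval : (∫ s in Icc (0:ℝ) t, -(1/2) * ((∫ μ in Icc (-1:ℝ) 0, |μ| * E s b μ ^ 2) +
          ∫ μ in Icc (0:ℝ) 1, μ * E s a μ ^ 2)) =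
          -(1/2) * ((∫ s in Icc (0:ℝ) t, ∫ μ in Icc (-1:ℝ) 0, |μ| * E s b μ ^ 2) +
          ∫ s in Icc (0:ℝ) t, ∫ μ in Icc (0:ℝ) 1, μ * E s a μ ^ 2) := by
        rw [integral_const_mul, integral_add hW1it hW2it]
      rw [hLval] at hmono
      have hm1 : (∫ s in Icc (0:ℝ) t, ∫ μ in Icc (-1:ℝ) 0, |μ| * E s b μ ^ 2) ≤ C * ε ^ 2 := by
        refine le_trans (setIntegral_mono_set hW1iT ?_ (HasSubset.Subset.eventuallyLE hsub)) hBb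
        refine (ae_restrict_iff' mIT).2 (ae_of_all _ fun s hs => ?_)
        exact setIntegral_nonneg mIm10 fun μ hμ => mul_nonneg (abs_nonneg μ) (sq_nonneg _)
      have hm2 : (∫ s in Icc (0:ℝ) t, ∫ μ in Icc (0:ℝ) 1, μ * E s a μ ^ 2) ≤ C * ε ^ 2 := by
        refine le_trans (setIntegral_mono_set hW2iT ?_ (HasSubset.Subset.eventuallyLE hsub)) hBa
        refine (ae_restrict_iff' mIT).2 (ae_of_all _ fun s hs => ?_)
        exact setIntegral_nonneg mI01 fun μ hμ => mul_nonneg hμ.1 (sq_nonneg _)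
      linarith
    -- the dissipation term: spectral gap
    have hmemE : ∀ s ∈ Icc (0:ℝ) T, ∀ x ∈ Icc a b,
        MemLp (fun μ => E s x μ) 2 (volume.restrict (Icc (-1:ℝ) 1)) := by
      intro s hs x hx
      refine MemLp.of_bound (hEcont3 s x).aestronglyMeasurable K ?_
      refine (ae_restrict_iff' mΛ).2 (ae_of_all _ fun μ hμ => ?_)
      simpa [Real.norm_eq_abs] using (hKall s hs x hx μ hμ).1
    have hQsm : StronglyMeasurable (fun p : ℝ × ℝ =>
        ∫ μ in Icc (-1:ℝ) 1, (E p.1 p.2 μ - (1/2) * ∫ μ' in Icc (-1:ℝ) 1, E p.1 p.2 μ') ^ 2) := by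
      refine aux_sm_int' (volume.restrict (Icc (-1:ℝ) 1)) (fun (p : ℝ × ℝ) (μ : ℝ) =>
        (E p.1 p.2 μ - (1/2) * ∫ μ' in Icc (-1:ℝ) 1, E p.1 p.2 μ') ^ 2) ?_
      apply Measurable.stronglyMeasurable
      have h1 : Measurable (fun q : (ℝ × ℝ) × ℝ => E q.1.1 q.1.2 q.2) :=
        (hEc.comp ((continuous_fst.fst).prodMk
          ((continuous_fst.snd).prodMk continuous_snd))).measurable
      have h2 : Measurable (fun q : (ℝ × ℝ) × ℝ => ∫ μ' in Icc (-1:ℝ) 1, E q.1.1 q.1.2 μ') :=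
        hmsm.measurable.comp measurable_fst
      exact (h1.sub (h2.const_mul (1/2))).pow_const 2
    have hQnn : ∀ s x : ℝ, 0 ≤
        ∫ μ in Icc (-1:ℝ) 1, (E s x μ - (1/2) * ∫ μ' in Icc (-1:ℝ) 1, E s x μ') ^ 2 :=
      fun s x => setIntegral_nonneg mΛ fun μ _ => sq_nonneg _
    have hmb : ∀ s ∈ Icc (0:ℝ) T, ∀ x ∈ Icc a b, |∫ μ' in Icc (-1:ℝ) 1, E s x μ'| ≤ K * 2 := by
      intro s hs x hx
      have h := aux_bdInner (Icc (-1:ℝ) 1) mΛ fΛ _ K (hEcont3 s x).integrableOn_Icc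
        (fun μ hμ => (hKall s hs x hx μ hμ).1)
      rwa [hvolΛ] at h
    have hQbd : ∀ s ∈ Icc (0:ℝ) T, ∀ x ∈ Icc a b,
        (∫ μ in Icc (-1:ℝ) 1, (E s x μ - (1/2) * ∫ μ' in Icc (-1:ℝ) 1, E s x μ') ^ 2) ≤
          4 * K ^ 2 * 2 := by
      intro s hs x hx
      have hc : Continuous (fun μ =>
          (E s x μ - (1/2) * ∫ μ' in Icc (-1:ℝ) 1, E s x μ') ^ 2) :=
        ((hEcont3 s x).sub continuous_const).pow 2
      have hbd : ∀ μ ∈ Icc (-1:ℝ) 1,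
          (E s x μ - (1/2) * ∫ μ' in Icc (-1:ℝ) 1, E s x μ') ^ 2 ≤ 4 * K ^ 2 := by
        intro μ hμ
        have h1 := (hKall s hs x hx μ hμ).1
        have h2 := hmb s hs x hx
        nlinarith [neg_abs_le (E s x μ), le_abs_self (E s x μ),
          neg_abs_le (∫ μ' in Icc (-1:ℝ) 1, E s x μ'),
          le_abs_self (∫ μ' in Icc (-1:ℝ) 1, E s x μ')]
      have h := aux_intle (Icc (-1:ℝ) 1) mΛ fΛ _ (4 * K ^ 2) hc.integrableOn_Icc hbd
      rwa [hvolΛ] at h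
    have hsgp : ∀ s ∈ Icc (0:ℝ) t, ∀ x ∈ Icc a b,
        σ₀/ε * (∫ μ in Icc (-1:ℝ) 1,
            (E s x μ - (1/2) * ∫ μ' in Icc (-1:ℝ) 1, E s x μ') ^ 2) ≤
        ∫ μ in Icc (-1:ℝ) 1,
          (1/ε) * (E s x μ * (E s x μ - ∫ μ' in Icc (-1:ℝ) 1, κ μ μ' * E s x μ')) := by
      intro s hs x hx
      have h : σ₀ * (∫ μ in Icc (-1:ℝ) 1,
          (E s x μ - (1/2) * ∫ μ' in Icc (-1:ℝ) 1, E s x μ') ^ 2) ≤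
          ∫ μ in Icc (-1:ℝ) 1,
            E s x μ * (E s x μ - ∫ μ' in Icc (-1:ℝ) 1, κ μ μ' * E s x μ') :=
        hsg (fun μ => E s x μ) (hmemE s (hsub hs) x hx)
      rw [integral_const_mul]
      calc σ₀/ε * (∫ μ in Icc (-1:ℝ) 1,
            (E s x μ - (1/2) * ∫ μ' in Icc (-1:ℝ) 1, E s x μ') ^ 2)
          = (1/ε) * (σ₀ * ∫ μ in Icc (-1:ℝ) 1,
            (E s x μ - (1/2) * ∫ μ' in Icc (-1:ℝ) 1, E s x μ') ^ 2) := by ring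
        _ ≤ (1/ε) * ∫ μ in Icc (-1:ℝ) 1,
            E s x μ * (E s x μ - ∫ μ' in Icc (-1:ℝ) 1, κ μ μ' * E s x μ') :=
          mul_le_mul_of_nonneg_left h (by positivity)
    have hA3midb : ∀ s ∈ Icc (0:ℝ) t, ∀ x ∈ Icc a b,
        |∫ μ in Icc (-1:ℝ) 1,
          (1/ε) * (E s x μ * (E s x μ - ∫ μ' in Icc (-1:ℝ) 1, κ μ μ' * E s x μ'))| ≤
        1/ε * (2 * K ^ 2) * 2 := by
      intro s hs x hx
      have h := aux_bdInner (Icc (-1:ℝ) 1) mΛ fΛ _ (1/ε * (2 * K ^ 2)) (hA3i s hs x hx)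
        (hA3b s hs x hx)
      rwa [hvolΛ] at h
    have hS3lb : σ₀/ε * (∫ s in Icc (0:ℝ) t, ∫ x in Icc a b, ∫ μ in Icc (-1:ℝ) 1,
        (E s x μ - (1/2) * ∫ μ' in Icc (-1:ℝ) 1, E s x μ') ^ 2) ≤
        ∫ s in Icc (0:ℝ) t, ∫ x in Icc a b, ∫ μ in Icc (-1:ℝ) 1,
          (1/ε) * (E s x μ * (E s x μ - ∫ μ' in Icc (-1:ℝ) 1, κ μ μ' * E s x μ')) := by
      have h := aux_mono2 (Icc (0:ℝ) t) (Icc a b) mIt mΩ fIt fΩ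
        (fun s x => σ₀/ε * ∫ μ in Icc (-1:ℝ) 1,
          (E s x μ - (1/2) * ∫ μ' in Icc (-1:ℝ) 1, E s x μ') ^ 2)
        (fun s x => ∫ μ in Icc (-1:ℝ) 1,
          (1/ε) * (E s x μ * (E s x μ - ∫ μ' in Icc (-1:ℝ) 1, κ μ μ' * E s x μ')))
        (hQsm.const_mul (σ₀/ε)) hA3sm2 (σ₀/ε * (4 * K ^ 2 * 2)) (1/ε * (2 * K ^ 2) * 2)
        ?_ (fun s hs x hx => hA3midb s hs x hx) (fun s hs x hx => hsgp s hs x hx)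
      · have heq : (∫ s in Icc (0:ℝ) t, ∫ x in Icc a b, σ₀/ε * ∫ μ in Icc (-1:ℝ) 1,
            (E s x μ - (1/2) * ∫ μ' in Icc (-1:ℝ) 1, E s x μ') ^ 2) =
            σ₀/ε * ∫ s in Icc (0:ℝ) t, ∫ x in Icc a b, ∫ μ in Icc (-1:ℝ) 1,
              (E s x μ - (1/2) * ∫ μ' in Icc (-1:ℝ) 1, E s x μ') ^ 2 := by
          rw [← integral_const_mul]
          exact setIntegral_congr_fun mIt fun s hs => integral_const_mul _ _
        linarith [h, heq.symm.le, heq.le]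
      · intro s hs x hx
        rw [abs_of_nonneg (mul_nonneg (by positivity) (hQnn s x))]
        exact mul_le_mul_of_nonneg_left (hQbd s (hsub hs) x hx) (by positivity)
    -- the R-term
    have hR2nn : ∀ s x : ℝ, 0 ≤ ∫ μ in Icc (-1:ℝ) 1, R s x μ ^ 2 :=
      fun s x => setIntegral_nonneg mΛ fun μ _ => sq_nonneg _
    have hS4pt : ∀ s ∈ Icc (0:ℝ) t, ∀ x ∈ Icc a b,
        (∫ μ in Icc (-1:ℝ) 1, E s x μ * R s x μ) ≤
          σ₀/ε * (∫ μ in Icc (-1:ℝ) 1,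
            (E s x μ - (1/2) * ∫ μ' in Icc (-1:ℝ) 1, E s x μ') ^ 2) +
          ε/(4*σ₀) * (∫ μ in Icc (-1:ℝ) 1, R s x μ ^ 2) := by
      intro s hs x hx
      have h0 : (∫ μ in Icc (-1:ℝ) 1, R s x μ) = 0 := hR0 s (hsub hs) x hx
      have hRi1 : Integrable (fun μ => R s x μ) (volume.restrict (Icc (-1:ℝ) 1)) :=
        (hRcont3 s x).integrableOn_Icc
      have h1 : (∫ μ in Icc (-1:ℝ) 1,
          (E s x μ - (1/2) * ∫ μ' in Icc (-1:ℝ) 1, E s x μ') * R s x μ) =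
          ∫ μ in Icc (-1:ℝ) 1, E s x μ * R s x μ := by
        have h2 : (fun μ => (E s x μ - (1/2) * ∫ μ' in Icc (-1:ℝ) 1, E s x μ') * R s x μ) =
            fun μ => E s x μ * R s x μ -
              ((1/2) * ∫ μ' in Icc (-1:ℝ) 1, E s x μ') * R s x μ := by
          funext μ; ring
        rw [h2, integral_sub (hERi s hs x hx) (hRi1.const_mul _), integral_const_mul, h0,
          mul_zero, sub_zero]
      have hcs : (∫ μ in Icc (-1:ℝ) 1,
          (E s x μ - (1/2) * ∫ μ' in Icc (-1:ℝ) 1, E s x μ') * R s x μ) ≤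
          Real.sqrt (∫ μ in Icc (-1:ℝ) 1,
            (E s x μ - (1/2) * ∫ μ' in Icc (-1:ℝ) 1, E s x μ') ^ 2) *
          Real.sqrt (∫ μ in Icc (-1:ℝ) 1, R s x μ ^ 2) :=
        aux_cs (volume.restrict (Icc (-1:ℝ) 1))
          (fun μ => E s x μ - (1/2) * ∫ μ' in Icc (-1:ℝ) 1, E s x μ') (fun μ => R s x μ)
          ((hEcont3 s x).sub continuous_const).aestronglyMeasurable
          (hRcont3 s x).aestronglyMeasurable
          (((hEcont3 s x).sub continuous_const).pow 2).integrableOn_Icc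
          ((hRcont3 s x).pow 2).integrableOn_Icc
      have hyoung := hy (∫ μ in Icc (-1:ℝ) 1,
          (E s x μ - (1/2) * ∫ μ' in Icc (-1:ℝ) 1, E s x μ') ^ 2)
        (∫ μ in Icc (-1:ℝ) 1, R s x μ ^ 2) (hQnn s x) (hR2nn s x)
      linarith
    have hR2sm2' : StronglyMeasurable (fun p : ℝ × ℝ => ∫ μ in Icc (-1:ℝ) 1, R p.1 p.2 μ ^ 2) :=
      hR2sm2
    have hERmidb : ∀ s ∈ Icc (0:ℝ) t, ∀ x ∈ Icc a b,
        |∫ μ in Icc (-1:ℝ) 1, E s x μ * R s x μ| ≤ K ^ 2 * 2 := by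
      intro s hs x hx
      have h := aux_bdInner (Icc (-1:ℝ) 1) mΛ fΛ _ (K ^ 2) (hERi s hs x hx) (hERb s hs x hx)
      rwa [hvolΛ] at h
    have hR2midb : ∀ s ∈ Icc (0:ℝ) T, ∀ x ∈ Icc a b,
        (∫ μ in Icc (-1:ℝ) 1, R s x μ ^ 2) ≤ K ^ 2 * 2 := by
      intro s hs x hx
      have h := aux_intle (Icc (-1:ℝ) 1) mΛ fΛ _ (K ^ 2) ((hRcont3 s x).pow 2).integrableOn_Icc
        (fun μ hμ => by
          have := hK2R s hs x hx μ hμ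
          rwa [abs_of_nonneg (sq_nonneg _)] at this)
      rwa [hvolΛ] at h
    have hS4a : (∫ s in Icc (0:ℝ) t, ∫ x in Icc a b, ∫ μ in Icc (-1:ℝ) 1, E s x μ * R s x μ) ≤
        ∫ s in Icc (0:ℝ) t, ∫ x in Icc a b,
          (σ₀/ε * (∫ μ in Icc (-1:ℝ) 1,
            (E s x μ - (1/2) * ∫ μ' in Icc (-1:ℝ) 1, E s x μ') ^ 2) +
           ε/(4*σ₀) * (∫ μ in Icc (-1:ℝ) 1, R s x μ ^ 2)) := by
      refine aux_mono2 (Icc (0:ℝ) t) (Icc a b) mIt mΩ fIt fΩ _ _ hERsm2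
        ((hQsm.const_mul (σ₀/ε)).add (hR2sm2'.const_mul (ε/(4*σ₀))))
        (K ^ 2 * 2) (σ₀/ε * (4 * K ^ 2 * 2) + ε/(4*σ₀) * (K ^ 2 * 2)) hERmidb ?_ hS4pt
      intro s hs x hx
      have hq1 : (0:ℝ) ≤ σ₀/ε * (∫ μ in Icc (-1:ℝ) 1,
          (E s x μ - (1/2) * ∫ μ' in Icc (-1:ℝ) 1, E s x μ') ^ 2) :=
        mul_nonneg (by positivity) (hQnn s x)
      have hq2 : (0:ℝ) ≤ ε/(4*σ₀) * (∫ μ in Icc (-1:ℝ) 1, R s x μ ^ 2) :=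
        mul_nonneg (by positivity) (hR2nn s x)
      rw [abs_of_nonneg (add_nonneg hq1 hq2)]
      have hb1 := mul_le_mul_of_nonneg_left (hQbd s (hsub hs) x hx)
        (show (0:ℝ) ≤ σ₀/ε by positivity)
      have hb2 := mul_le_mul_of_nonneg_left (hR2midb s (hsub hs) x hx)
        (show (0:ℝ) ≤ ε/(4*σ₀) by positivity)
      linarith
    have hQmid : ∀ s ∈ Icc (0:ℝ) t, Integrable (fun x => ∫ μ in Icc (-1:ℝ) 1,
        (E s x μ - (1/2) * ∫ μ' in Icc (-1:ℝ) 1, E s x μ') ^ 2)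
        (volume.restrict (Icc a b)) := by
      intro s hs
      refine aux_intS2 _ mΩ fΩ _ ((hQsm.comp_measurable
        (measurable_const.prodMk measurable_id)).aestronglyMeasurable) (4 * K ^ 2 * 2) ?_
      intro x hx
      rw [abs_of_nonneg (hQnn s x)]
      exact hQbd s (hsub hs) x hx
    have hR2mid' : ∀ s ∈ Icc (0:ℝ) t, Integrable (fun x => ∫ μ in Icc (-1:ℝ) 1, R s x μ ^ 2)
        (volume.restrict (Icc a b)) := fun s hs => hR2mid s (hsub hs)
    have hS4b : (∫ s in Icc (0:ℝ) t, ∫ x in Icc a b,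
        (σ₀/ε * (∫ μ in Icc (-1:ℝ) 1,
          (E s x μ - (1/2) * ∫ μ' in Icc (-1:ℝ) 1, E s x μ') ^ 2) +
         ε/(4*σ₀) * (∫ μ in Icc (-1:ℝ) 1, R s x μ ^ 2))) =
        (∫ s in Icc (0:ℝ) t, ∫ x in Icc a b, σ₀/ε * (∫ μ in Icc (-1:ℝ) 1,
          (E s x μ - (1/2) * ∫ μ' in Icc (-1:ℝ) 1, E s x μ') ^ 2)) +
        ∫ s in Icc (0:ℝ) t, ∫ x in Icc a b,
          ε/(4*σ₀) * (∫ μ in Icc (-1:ℝ) 1, R s x μ ^ 2) := by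
      refine aux_add2d (Icc (0:ℝ) t) (Icc a b) mIt mΩ fIt fΩ _ _
        (hQsm.const_mul (σ₀/ε)) (hR2sm2'.const_mul (ε/(4*σ₀)))
        (σ₀/ε * (4 * K ^ 2 * 2)) (ε/(4*σ₀) * (K ^ 2 * 2)) ?_ ?_
      · intro s hs x hx
        rw [abs_of_nonneg (mul_nonneg (by positivity) (hQnn s x))]
        exact mul_le_mul_of_nonneg_left (hQbd s (hsub hs) x hx) (by positivity)
      · intro s hs x hx
        rw [abs_of_nonneg (mul_nonneg (by positivity) (hR2nn s x))]
        exact mul_le_mul_of_nonneg_left (hR2midb s (hsub hs) x hx) (by positivity)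
    have hQfact : (∫ s in Icc (0:ℝ) t, ∫ x in Icc a b, σ₀/ε * (∫ μ in Icc (-1:ℝ) 1,
        (E s x μ - (1/2) * ∫ μ' in Icc (-1:ℝ) 1, E s x μ') ^ 2)) =
        σ₀/ε * ∫ s in Icc (0:ℝ) t, ∫ x in Icc a b, ∫ μ in Icc (-1:ℝ) 1,
          (E s x μ - (1/2) * ∫ μ' in Icc (-1:ℝ) 1, E s x μ') ^ 2 := by
      rw [← integral_const_mul]
      exact setIntegral_congr_fun mIt fun s hs => integral_const_mul _ _
    have hRfact : (∫ s in Icc (0:ℝ) t, ∫ x in Icc a b,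
        ε/(4*σ₀) * (∫ μ in Icc (-1:ℝ) 1, R s x μ ^ 2)) =
        ε/(4*σ₀) * ∫ s in Icc (0:ℝ) t, ∫ x in Icc a b, ∫ μ in Icc (-1:ℝ) 1, R s x μ ^ 2 := by
      rw [← integral_const_mul]
      exact setIntegral_congr_fun mIt fun s hs => integral_const_mul _ _
    have hRR : (∫ s in Icc (0:ℝ) t, ∫ x in Icc a b, ∫ μ in Icc (-1:ℝ) 1, R s x μ ^ 2) ≤
        C ^ 2 * ε ^ 4 := by
      refine le_trans (setIntegral_mono_set hR2out ?_ (HasSubset.Subset.eventuallyLE hsub)) hRint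
      refine (ae_restrict_iff' mIT).2 (ae_of_all _ fun s hs => ?_)
      exact setIntegral_nonneg mΩ fun x _ => hR2nn s x
    have hS4ub : (∫ s in Icc (0:ℝ) t, ∫ x in Icc a b, ∫ μ in Icc (-1:ℝ) 1,
        E s x μ * R s x μ) ≤
        σ₀/ε * (∫ s in Icc (0:ℝ) t, ∫ x in Icc a b, ∫ μ in Icc (-1:ℝ) 1,
          (E s x μ - (1/2) * ∫ μ' in Icc (-1:ℝ) 1, E s x μ') ^ 2) +
        ε/(4*σ₀) * (C ^ 2 * ε ^ 4) := by
      have h := hS4a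
      rw [hS4b, hQfact, hRfact] at h
      have h2 := mul_le_mul_of_nonneg_left hRR (show (0:ℝ) ≤ ε/(4*σ₀) by positivity)
      linarith
    -- the G-term
    have hsqE : ∀ s ∈ Icc (0:ℝ) T, ∀ x ∈ Icc a b,
        (∫ μ in Icc (-1:ℝ) 1, E s x μ ^ 2) ≤ K ^ 2 * 2 := by
      intro s hs x hx
      have h := aux_intle (Icc (-1:ℝ) 1) mΛ fΛ _ (K ^ 2) ((hEcont3 s x).pow 2).integrableOn_Icc
        (fun μ hμ => by
          have := hK2E s hs x hx μ hμ
          rwa [abs_of_nonneg (sq_nonneg _)] at this)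
      rwa [hvolΛ] at h
    have hsqG : ∀ s ∈ Icc (0:ℝ) T, ∀ x ∈ Icc a b,
        (∫ μ in Icc (-1:ℝ) 1, G s x μ ^ 2) ≤ K ^ 2 * 2 := by
      intro s hs x hx
      have h := aux_intle (Icc (-1:ℝ) 1) mΛ fΛ _ (K ^ 2) ((hGcont3 s x).pow 2).integrableOn_Icc
        (fun μ hμ => by
          have := hK2G s hs x hx μ hμ
          rwa [abs_of_nonneg (sq_nonneg _)] at this)
      rwa [hvolΛ] at h
    have hGnbd : ∀ s ∈ Icc (0:ℝ) T,
        (∫ x in Icc a b, ∫ μ in Icc (-1:ℝ) 1, G s x μ ^ 2) ≤ K ^ 2 * 2 * (b - a) := by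
      intro s hs
      have h2 := aux_intle (Icc a b) mΩ fΩ _ (K ^ 2 * 2) (hG2mid s hs) (hsqG s hs)
      rwa [hvolΩ] at h2
    have hEinn : ∀ s x : ℝ, 0 ≤ ∫ μ in Icc (-1:ℝ) 1, E s x μ ^ 2 :=
      fun s x => setIntegral_nonneg mΛ fun μ _ => sq_nonneg _
    have hGinn : ∀ s x : ℝ, 0 ≤ ∫ μ in Icc (-1:ℝ) 1, G s x μ ^ 2 :=
      fun s x => setIntegral_nonneg mΛ fun μ _ => sq_nonneg _
    have hS5 : (∫ s in Icc (0:ℝ) t, ∫ x in Icc a b, ∫ μ in Icc (-1:ℝ) 1,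
        E s x μ * G s x μ) ≤ M * (C * ε ^ 3) := by
      have hstep : ∀ s ∈ Icc (0:ℝ) t,
          (∫ x in Icc a b, ∫ μ in Icc (-1:ℝ) 1, E s x μ * G s x μ) ≤
          M * Real.sqrt (∫ x in Icc a b, ∫ μ in Icc (-1:ℝ) 1, G s x μ ^ 2) := by
        intro s hs
        have h1 : ∀ x ∈ Icc a b, (∫ μ in Icc (-1:ℝ) 1, E s x μ * G s x μ) ≤
            Real.sqrt (∫ μ in Icc (-1:ℝ) 1, E s x μ ^ 2) *
            Real.sqrt (∫ μ in Icc (-1:ℝ) 1, G s x μ ^ 2) := fun x hx =>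
          aux_cs (volume.restrict (Icc (-1:ℝ) 1)) (fun μ => E s x μ) (fun μ => G s x μ)
            (hEcont3 s x).aestronglyMeasurable (hGcont3 s x).aestronglyMeasurable
            ((hEcont3 s x).pow 2).integrableOn_Icc ((hGcont3 s x).pow 2).integrableOn_Icc
        have hsqEsm : StronglyMeasurable (fun x : ℝ =>
            Real.sqrt (∫ μ in Icc (-1:ℝ) 1, E s x μ ^ 2)) :=
          Real.continuous_sqrt.comp_stronglyMeasurable
            (hE2sm2.comp_measurable (measurable_const.prodMk measurable_id))
        have hsqGsm : StronglyMeasurable (fun x : ℝ =>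
            Real.sqrt (∫ μ in Icc (-1:ℝ) 1, G s x μ ^ 2)) :=
          Real.continuous_sqrt.comp_stronglyMeasurable
            (hG2sm2.comp_measurable (measurable_const.prodMk measurable_id))
        have hrhsint : Integrable (fun x => Real.sqrt (∫ μ in Icc (-1:ℝ) 1, E s x μ ^ 2) *
            Real.sqrt (∫ μ in Icc (-1:ℝ) 1, G s x μ ^ 2)) (volume.restrict (Icc a b)) := by
          refine aux_intS2 _ mΩ fΩ _ (hsqEsm.mul hsqGsm).aestronglyMeasurable (K ^ 2 * 2) ?_
          intro x hx
          rw [abs_of_nonneg (mul_nonneg (Real.sqrt_nonneg _) (Real.sqrt_nonneg _))]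
          have hb1 : Real.sqrt (∫ μ in Icc (-1:ℝ) 1, E s x μ ^ 2) ≤
              Real.sqrt (K ^ 2 * 2) := Real.sqrt_le_sqrt (hsqE s (hsub hs) x hx)
          have hb2 : Real.sqrt (∫ μ in Icc (-1:ℝ) 1, G s x μ ^ 2) ≤
              Real.sqrt (K ^ 2 * 2) := Real.sqrt_le_sqrt (hsqG s (hsub hs) x hx)
          calc Real.sqrt (∫ μ in Icc (-1:ℝ) 1, E s x μ ^ 2) *
              Real.sqrt (∫ μ in Icc (-1:ℝ) 1, G s x μ ^ 2) ≤
              Real.sqrt (K ^ 2 * 2) * Real.sqrt (K ^ 2 * 2) :=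
                mul_le_mul hb1 hb2 (Real.sqrt_nonneg _) (Real.sqrt_nonneg _)
            _ = K ^ 2 * 2 := Real.mul_self_sqrt (by positivity)
        have h2 := setIntegral_mono_on (hEGmid s hs) hrhsint mΩ h1
        have h4 := aux_cs (volume.restrict (Icc a b))
          (fun x => Real.sqrt (∫ μ in Icc (-1:ℝ) 1, E s x μ ^ 2))
          (fun x => Real.sqrt (∫ μ in Icc (-1:ℝ) 1, G s x μ ^ 2))
          hsqEsm.aestronglyMeasurable hsqGsm.aestronglyMeasurable
          ((hE2mid s (hsub hs)).congr (ae_of_all _ fun x =>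
            (Real.sq_sqrt (hEinn s x)).symm))
          ((hG2mid s (hsub hs)).congr (ae_of_all _ fun x =>
            (Real.sq_sqrt (hGinn s x)).symm))
        have h5 : (∫ x in Icc a b, Real.sqrt (∫ μ in Icc (-1:ℝ) 1, E s x μ ^ 2) ^ 2) =
            ∫ x in Icc a b, ∫ μ in Icc (-1:ℝ) 1, E s x μ ^ 2 :=
          integral_congr_ae (ae_of_all _ fun x => Real.sq_sqrt (hEinn s x))
        have h6 : (∫ x in Icc a b, Real.sqrt (∫ μ in Icc (-1:ℝ) 1, G s x μ ^ 2) ^ 2) =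
            ∫ x in Icc a b, ∫ μ in Icc (-1:ℝ) 1, G s x μ ^ 2 :=
          integral_congr_ae (ae_of_all _ fun x => Real.sq_sqrt (hGinn s x))
        rw [h5, h6] at h4
        have h7 := hMge s (hsub hs)
        have h8 := mul_le_mul_of_nonneg_right h7
          (Real.sqrt_nonneg (∫ x in Icc a b, ∫ μ in Icc (-1:ℝ) 1, G s x μ ^ 2))
        linarith
      have hGsq1 : StronglyMeasurable (fun s : ℝ =>
          Real.sqrt (∫ x in Icc a b, ∫ μ in Icc (-1:ℝ) 1, G s x μ ^ 2)) :=
        Real.continuous_sqrt.comp_stronglyMeasurable hG2sm1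
      have hGsqit : Integrable (fun s =>
          Real.sqrt (∫ x in Icc a b, ∫ μ in Icc (-1:ℝ) 1, G s x μ ^ 2))
          (volume.restrict (Icc (0:ℝ) t)) := by
        refine aux_intS2 _ mIt fIt _ hGsq1.aestronglyMeasurable
          (Real.sqrt (K ^ 2 * 2 * (b - a))) ?_
        intro s hs
        rw [abs_of_nonneg (Real.sqrt_nonneg _)]
        exact Real.sqrt_le_sqrt (hGnbd s (hsub hs))
      have hGsqiT : Integrable (fun s =>
          Real.sqrt (∫ x in Icc a b, ∫ μ in Icc (-1:ℝ) 1, G s x μ ^ 2))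
          (volume.restrict (Icc (0:ℝ) T)) := by
        refine aux_intS2 _ mIT fIT _ hGsq1.aestronglyMeasurable
          (Real.sqrt (K ^ 2 * 2 * (b - a))) ?_
        intro s hs
        rw [abs_of_nonneg (Real.sqrt_nonneg _)]
        exact Real.sqrt_le_sqrt (hGnbd s hs)
      have h8 := setIntegral_mono_on hEGout (hGsqit.const_mul M) mIt hstep
      rw [integral_const_mul] at h8
      have h9 : (∫ s in Icc (0:ℝ) t,
          Real.sqrt (∫ x in Icc a b, ∫ μ in Icc (-1:ℝ) 1, G s x μ ^ 2)) ≤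
          ∫ s in Icc (0:ℝ) T,
            Real.sqrt (∫ x in Icc a b, ∫ μ in Icc (-1:ℝ) 1, G s x μ ^ 2) :=
        setIntegral_mono_set hGsqiT (ae_of_all _ fun s => Real.sqrt_nonneg _)
          (HasSubset.Subset.eventuallyLE hsub)
      have h10 : M * (∫ s in Icc (0:ℝ) t,
          Real.sqrt (∫ x in Icc a b, ∫ μ in Icc (-1:ℝ) 1, G s x μ ^ 2)) ≤ M * (C * ε ^ 3) :=
        mul_le_mul_of_nonneg_left (h9.trans hGint) hM0
      linarith
    -- assemble
    have hE0' : ε/2 * (∫ x in Icc a b, ∫ μ in Icc (-1:ℝ) 1, E 0 x μ ^ 2) ≤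
        ε/2 * (C * ε ^ 2) := mul_le_mul_of_nonneg_left hE0 (by positivity)
    have hkey : ε/2 * (∫ x in Icc a b, ∫ μ in Icc (-1:ℝ) 1, E t x μ ^ 2) ≤
        ε/2 * (C * ε ^ 2 + C ^ 2 / (2 * σ₀) * ε ^ 4 + 2 * M * C * ε ^ 2 + 2 * C * ε) := by
      have hS2' := hS2
      have hring : ε/2 * (C * ε ^ 2 + C ^ 2 / (2 * σ₀) * ε ^ 4 + 2 * M * C * ε ^ 2 + 2 * C * ε) =
          ε/2 * (C * ε ^ 2) + ε/(4*σ₀) * (C ^ 2 * ε ^ 4) + M * (C * ε ^ 3) + C * ε ^ 2 := by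
        field_simp
        ring
      rw [hring]
      linarith [hIdent, hS1, hS2', hS2lb, hS3lb, hS4ub, hS5, hE0']
    exact le_of_mul_le_mul_left (by linarith [hkey]) (show (0:ℝ) < ε/2 by positivity)

  -- conclude
  have hε2 : ε ^ 2 ≤ ε := by nlinarith
  have hε4 : ε ^ 4 ≤ ε := by nlinarith
  have hM2 : M ^ 2 ≤ (3 * C + C ^ 2 / (2 * σ₀)) * ε + (2 * C * ε ^ 2) * M := by
    have hMle : M ≤ Real.sqrt ((3 * C + C ^ 2 / (2 * σ₀)) * ε + (2 * C * ε ^ 2) * M) := by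
      refine csSup_le ⟨_, ⟨0, ⟨le_refl 0, hT.le⟩, rfl⟩⟩ ?_
      rintro y ⟨s, hs, rfl⟩
      refine Real.sqrt_le_sqrt ?_
      have h := master s hs
      have h4 : C ^ 2 / (2 * σ₀) * ε ^ 4 ≤ C ^ 2 / (2 * σ₀) * ε :=
        mul_le_mul_of_nonneg_left hε4 (by positivity)
      have h5 : C * ε ^ 2 ≤ C * ε := mul_le_mul_of_nonneg_left hε2 hC.le
      nlinarith
    have hRHS0 : 0 ≤ (3 * C + C ^ 2 / (2 * σ₀)) * ε + (2 * C * ε ^ 2) * M :=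
      add_nonneg (by positivity) (mul_nonneg (by positivity) hM0)
    calc M ^ 2 ≤ Real.sqrt ((3 * C + C ^ 2 / (2 * σ₀)) * ε + (2 * C * ε ^ 2) * M) ^ 2 :=
        pow_le_pow_left₀ hM0 hMle 2
      _ = (3 * C + C ^ 2 / (2 * σ₀)) * ε + (2 * C * ε ^ 2) * M := Real.sq_sqrt hRHS0
  have hMfin : M ≤ 2 * C * ε ^ 2 + Real.sqrt ((3 * C + C ^ 2 / (2 * σ₀)) * ε) := by
    have hs2 : Real.sqrt ((3 * C + C ^ 2 / (2 * σ₀)) * ε) ^ 2 =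
        (3 * C + C ^ 2 / (2 * σ₀)) * ε := Real.sq_sqrt (by positivity)
    by_contra hcon
    push_neg at hcon
    have hβ0 : (0:ℝ) ≤ 2 * C * ε ^ 2 := by positivity
    have hs0 : 0 ≤ Real.sqrt ((3 * C + C ^ 2 / (2 * σ₀)) * ε) := Real.sqrt_nonneg _
    nlinarith [mul_pos (show 0 < M - 2 * C * ε ^ 2 -
        Real.sqrt ((3 * C + C ^ 2 / (2 * σ₀)) * ε) by linarith)
      (show 0 < M + Real.sqrt ((3 * C + C ^ 2 / (2 * σ₀)) * ε) by nlinarith),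
      mul_nonneg hβ0 hs0]
  intro t ht
  have hsqm : Real.sqrt ((3 * C + C ^ 2 / (2 * σ₀)) * ε) =
      Real.sqrt (3 * C + C ^ 2 / (2 * σ₀)) * Real.sqrt ε := Real.sqrt_mul (by positivity) ε
  have hεsq : ε ^ 2 ≤ Real.sqrt ε := by
    have h1 : ε ≤ Real.sqrt ε := (Real.le_sqrt hε0.le hε0.le).2 (by nlinarith)
    linarith
  calc Real.sqrt (∫ x in Icc a b, ∫ μ in Icc (-1:ℝ) 1, E t x μ ^ 2) ≤ M := hMge t ht
    _ ≤ 2 * C * ε ^ 2 + Real.sqrt ((3 * C + C ^ 2 / (2 * σ₀)) * ε) := hMfin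
    _ ≤ 2 * C * Real.sqrt ε + Real.sqrt (3 * C + C ^ 2 / (2 * σ₀)) * Real.sqrt ε := by
        rw [hsqm]
        have := mul_le_mul_of_nonneg_left hεsq (show (0:ℝ) ≤ 2 * C by positivity)
        linarith
    _ = (2 * C + Real.sqrt (3 * C + C ^ 2 / (2 * σ₀))) * Real.sqrt ε := by ring
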